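/- arXiv:2002.06879 — 7 statements merged into one kernel-verified Lean document; each statement's English description precedes it below -/
import Mathlib

section
/- There exists a universal constant C > 0 such that for all integers n, k, j with k ≥ 1, n ≥ 5k, 0 ≤ 5j ≤ k, and every real ε with 1/k ≤ ε ≤ 1, setting k' = (1+ε)k, one has |φ_{j,0}(k') − φ_{j,0}(k)| ≤ C·ε·( j^{3/2}/(k·sqrt(n)) + sqrt(j)·k/n^{3/2} ), where φ_{j,0}(κ) = sqrt(j(κ−j+1)(n−κ−j+1)/((n−2j+2)(n−2j+1)κ)). -/
set_option maxHeartbeats 1000000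

lemma sqrt_abs_diff_le' (a b : ℝ) (ha : 0 ≤ a) (hb : 0 < b) :
    |Real.sqrt a - Real.sqrt b| ≤ |a - b| / Real.sqrt b := by
  have hsb : 0 < Real.sqrt b := Real.sqrt_pos.mpr hb
  have hsa : 0 ≤ Real.sqrt a := Real.sqrt_nonneg a
  rw [le_div_iff₀ hsb]
  have key : |Real.sqrt a - Real.sqrt b| * (Real.sqrt a + Real.sqrt b) = |a - b| := by
    rw [← abs_of_nonneg (by linarith : (0:ℝ) ≤ Real.sqrt a + Real.sqrt b), ← abs_mul]
    congr 1
    linear_combination (Real.mul_self_sqrt ha) - (Real.mul_self_sqrt hb.le)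
  nlinarith [abs_nonneg (Real.sqrt a - Real.sqrt b), key]



/-- `φ_{j,0}(κ) = sqrt(j(κ−j+1)(n−κ−j+1)/((n−2j+2)(n−2j+1)κ))` -/
noncomputable def phi0 (n j : ℤ) (κ : ℝ) : ℝ :=
  Real.sqrt (((j : ℝ) * (κ - (j : ℝ) + 1) * ((n : ℝ) - κ - (j : ℝ) + 1)) /
    (((n : ℝ) - 2 * (j : ℝ) + 2) * ((n : ℝ) - 2 * (j : ℝ) + 1) * κ))

/-- `φ_{j,1}(κ) = sqrt(κ/n)` -/
noncomputable def phi1 (n : ℤ) (κ : ℝ) : ℝ := Real.sqrt (κ / (n : ℝ))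

/-- `φ_{j,2}(κ) = ((n−2κ)/sqrt(nκ))·sqrt(j(n−j+1)/((n−2j+2)(n−2j)))` -/
noncomputable def phi2 (n j : ℤ) (κ : ℝ) : ℝ :=
  (((n : ℝ) - 2 * κ) / Real.sqrt ((n : ℝ) * κ)) *
    Real.sqrt (((j : ℝ) * ((n : ℝ) - (j : ℝ) + 1)) /
      (((n : ℝ) - 2 * (j : ℝ) + 2) * ((n : ℝ) - 2 * (j : ℝ))))

/-- `φ_{j,3}(κ) = sqrt((n−j+1)(κ−j)(n−κ−j)/((n−2j+1)(n−2j)κ))` -/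
noncomputable def phi3 (n j : ℤ) (κ : ℝ) : ℝ :=
  Real.sqrt ((((n : ℝ) - (j : ℝ) + 1) * (κ - (j : ℝ)) * ((n : ℝ) - κ - (j : ℝ))) /
    (((n : ℝ) - 2 * (j : ℝ) + 1) * ((n : ℝ) - 2 * (j : ℝ)) * κ))


/-- `|φ_{j,0}(k') − φ_{j,0}(k)| ≤ C·ε·( j^{3/2}/(k·sqrt(n)) + sqrt(j)·k/n^{3/2} )`
where `k' = (1+ε)k`. -/
theorem phi0_difference_bound :
    ∃ C : ℝ, 0 < C ∧ ∀ (n k j : ℤ) (ε : ℝ),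
      1 ≤ k → 5 * k ≤ n → 0 ≤ j → 5 * j ≤ k → 1 / (k : ℝ) ≤ ε → ε ≤ 1 →
      |phi0 n j ((1 + ε) * (k : ℝ)) - phi0 n j (k : ℝ)| ≤
        C * ε * ((j : ℝ) * Real.sqrt (j : ℝ) / ((k : ℝ) * Real.sqrt (n : ℝ))
          + Real.sqrt (j : ℝ) * (k : ℝ) / ((n : ℝ) * Real.sqrt (n : ℝ))) := by
  refine ⟨100, by norm_num, ?_⟩
  intro n k j ε hk1 hkn hj0 hjk hεlo hεhi
  have hK1 : (1:ℝ) ≤ (k:ℝ) := by exact_mod_cast hk1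
  have hKpos : (0:ℝ) < (k:ℝ) := by linarith
  have hεpos : 0 < ε := lt_of_lt_of_le (by positivity) hεlo
  rcases eq_or_lt_of_le hj0 with h0 | hj1
  · -- j = 0 case
    simp [phi0, ← h0]
  · -- j ≥ 1 case
    have hJ1 : (1:ℝ) ≤ (j:ℝ) := by exact_mod_cast hj1
    have hJK : 5*(j:ℝ) ≤ (k:ℝ) := by exact_mod_cast hjk
    have hKN : 5*(k:ℝ) ≤ (n:ℝ) := by exact_mod_cast hkn
    set J : ℝ := (j:ℝ) with hJdef
    set K : ℝ := (k:ℝ) with hKdef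
    set N : ℝ := (n:ℝ) with hNdef
    have hK5 : 5 ≤ K := by linarith
    have hN25 : 25 ≤ N := by linarith
    have hJN : 25*J ≤ N := by linarith
    have hJpos : 0 < J := by linarith
    have hNpos : 0 < N := by linarith
    set κ' : ℝ := (1+ε)*K with hκdef
    have hκK : K ≤ κ' := by nlinarith
    have hκ2K : κ' ≤ 2*K := by nlinarith
    have hκpos : 0 < κ' := by linarith
    -- denominators
    have hd1 : (0:ℝ) < N - 2*J + 2 := by linarith
    have hd2 : (0:ℝ) < N - 2*J + 1 := by linarith
    have hDlow : N^2/2 ≤ (N - 2*J + 2)*(N - 2*J + 1) := by nlinarith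
    have hDhigh : (N - 2*J + 2)*(N - 2*J + 1) ≤ 2*N^2 := by nlinarith
    set A : ℝ := J * (K - J + 1) * (N - K - J + 1) / ((N - 2*J + 2) * (N - 2*J + 1) * K)
      with hAdef
    set A' : ℝ := J * (κ' - J + 1) * (N - κ' - J + 1) / ((N - 2*J + 2) * (N - 2*J + 1) * κ')
      with hA'def
    have hden : (0:ℝ) < (N - 2*J + 2) * (N - 2*J + 1) * K := by positivity
    have hden' : (0:ℝ) < (N - 2*J + 2) * (N - 2*J + 1) * κ' := by positivity
    have hf1 : 0 < K - J + 1 := by linarith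
    have hf2 : 0 < N - K - J + 1 := by linarith
    have hf1' : 0 < κ' - J + 1 := by linarith
    have hf2' : 0 < N - κ' - J + 1 := by linarith
    have hApos : 0 < A := by rw [hAdef]; positivity
    have hA'nonneg : 0 ≤ A' := by rw [hA'def]; positivity
    -- the key algebraic identity
    have hident : A' - A = ε * J * ((J-1)*(N-J+1) - K*κ') /
        ((N - 2*J + 2) * (N - 2*J + 1) * κ') := by
      rw [hAdef, hA'def, hκdef]
      field_simp
      ring
    -- bound on the difference of arguments
    have hdiff : |A' - A| ≤ ε * (4*J^2*N + 4*J*K^2) / (N^2 * K) := by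
      rw [hident, abs_div, abs_of_pos hden', div_le_div_iff₀ hden' (by positivity)]
      have hab0 : 0 ≤ (J-1)*(N-J+1) := mul_nonneg (by linarith) (by linarith)
      have hab2 : (J-1)*(N-J+1) ≤ 2*J*N := by nlinarith
      have hkk2 : K*κ' ≤ 2*K^2 := by nlinarith
      have hkk0 : 0 ≤ K*κ' := by positivity
      have hJN0 : 0 ≤ J*N := by positivity
      have habs : |(J-1)*(N-J+1) - K*κ'| ≤ 2*J*N + 2*K^2 := by
        rw [abs_le]; constructor <;> nlinarith
      have hnum : |ε * J * ((J-1)*(N-J+1) - K*κ')| ≤ ε * J * (2*J*N + 2*K^2) := by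
        rw [abs_mul, abs_of_pos (by positivity : (0:ℝ) < ε * J)]
        exact mul_le_mul_of_nonneg_left habs (by positivity)
      have hbig : ε * J * (2*J*N + 2*K^2) * (N^2*K) ≤
          ε * (4*J^2*N + 4*J*K^2) * ((N - 2*J + 2) * (N - 2*J + 1) * κ') := by
        have h1 : ε * J * (2*J*N + 2*K^2) * (N^2*K) =
            ε * (4*J^2*N + 4*J*K^2) * (N^2/2 * K) := by ring
        rw [h1]
        have h2 : N^2/2 * K ≤ (N - 2*J + 2) * (N - 2*J + 1) * κ' := by
          calc N^2/2 * K ≤ ((N - 2*J + 2) * (N - 2*J + 1)) * K :=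
                mul_le_mul_of_nonneg_right hDlow hKpos.le
            _ ≤ ((N - 2*J + 2) * (N - 2*J + 1)) * κ' :=
                mul_le_mul_of_nonneg_left hκK (by positivity)
        exact mul_le_mul_of_nonneg_left h2 (by positivity)
      calc |ε * J * ((J-1)*(N-J+1) - K*κ')| * (N^2*K)
          ≤ ε * J * (2*J*N + 2*K^2) * (N^2*K) :=
            mul_le_mul_of_nonneg_right hnum (by positivity)
        _ ≤ _ := hbig
    -- lower bound for A
    have hAlow : J/(9*N) ≤ A := by
      rw [hAdef, div_le_div_iff₀ (by positivity) hden]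
      have h45 : (4/5)*K ≤ K - J + 1 := by linarith
      have hh2 : N/2 ≤ N - K - J + 1 := by linarith
      have hnum : (4/5*K)*(N/2) ≤ (K - J + 1)*(N - K - J + 1) :=
        mul_le_mul h45 hh2 (by positivity) (by linarith)
      nlinarith [mul_le_mul_of_nonneg_left hnum (by positivity : (0:ℝ) ≤ 9*N*J),
        mul_le_mul_of_nonneg_right hDhigh (by positivity : (0:ℝ) ≤ K), hJpos, hNpos, hKpos]
    -- sqrt facts
    set s : ℝ := Real.sqrt J with hsdef
    set t : ℝ := Real.sqrt N with htdef
    have hspos : 0 < s := Real.sqrt_pos.mpr hJpos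
    have htpos : 0 < t := Real.sqrt_pos.mpr hNpos
    have hJs : J = s^2 := (Real.sq_sqrt hJpos.le).symm
    have hNt : N = t^2 := (Real.sq_sqrt hNpos.le).symm
    have hsqrtAlow : s/(3*t) ≤ Real.sqrt A := by
      have h9 : Real.sqrt (J/(9*N)) = s/(3*t) := by
        rw [Real.sqrt_div hJpos.le, show (9:ℝ)*N = 3^2*N by norm_num,
          Real.sqrt_mul (by positivity), Real.sqrt_sq (by norm_num : (0:ℝ) ≤ 3)]
      rw [← h9]
      exact Real.sqrt_le_sqrt hAlow
    have hsqrtApos : 0 < Real.sqrt A := Real.sqrt_pos.mpr hApos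
    -- main chain
    have e1 : phi0 n j K = Real.sqrt A := by rw [hAdef]; rfl
    have e2 : phi0 n j ((1 + ε) * K) = Real.sqrt A' := by rw [hA'def]; rfl
    rw [e1, e2]
    set R : ℝ := 100 * ε * (J * s / (K * t) + s * K / (N * t)) with hRdef
    have hRnonneg : 0 ≤ R := by
      rw [hRdef]; positivity
    have hfinal : |A' - A| / Real.sqrt A ≤ R := by
      rw [div_le_iff₀ hsqrtApos]
      have hB : ε * (4*J^2*N + 4*J*K^2) / (N^2 * K) ≤ R * (s/(3*t)) := by
        rw [hRdef, hJs, hNt, div_le_iff₀ (by positivity)]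
        have hexp : 100 * ε * (s ^ 2 * s / (K * t) + s * K / (t ^ 2 * t)) * (s / (3 * t)) *
            ((t^2)^2 * K) = (100/3) * ε * (s^4 * t^2 + s^2 * K^2) := by
          field_simp
        rw [hexp]
        have hX : (0:ℝ) ≤ ε * (s^4*t^2 + s^2*K^2) := by positivity
        linarith only [hX]
      calc |A' - A| ≤ ε * (4*J^2*N + 4*J*K^2) / (N^2 * K) := hdiff
        _ ≤ R * (s/(3*t)) := hB
        _ ≤ R * Real.sqrt A := mul_le_mul_of_nonneg_left hsqrtAlow hRnonneg
    calc |Real.sqrt A' - Real.sqrt A| ≤ |A' - A| / Real.sqrt A :=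
        sqrt_abs_diff_le' A' A hA'nonneg hApos
      _ ≤ R := hfinal
end

section
/- There exists a universal constant C > 0 such that for all integers n, k, j with k ≥ 1, n ≥ 5k, 0 ≤ 5j ≤ k, and every real ε with 1/k ≤ ε ≤ 1, setting k' = (1+ε)k, one has |φ_{j,2}(k') − φ_{j,2}(k)| ≤ C·ε·sqrt(j/k), where φ_{j,2}(κ) = ((n−2κ)/sqrt(nκ))·sqrt(j(n−j+1)/((n−2j+2)(n−2j))). -/
lemma phi2_aux (N K J ε : ℝ) (hK1 : 1 ≤ K) (hN5K : 5*K ≤ N) (hJ0 : 0 ≤ J)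
    (hJK : 5*J ≤ K) (hε1 : 1/K ≤ ε) (hε2 : ε ≤ 1) :
    |((N - 2 * ((1+ε)*K)) / Real.sqrt (N * ((1+ε)*K))) *
       Real.sqrt ((J * (N - J + 1)) / ((N - 2*J + 2) * (N - 2*J)))
     - ((N - 2 * K) / Real.sqrt (N * K)) *
       Real.sqrt ((J * (N - J + 1)) / ((N - 2*J + 2) * (N - 2*J)))| ≤
    10 * ε * Real.sqrt (J / K) := by
  have hKpos : (0:ℝ) < K := by linarith
  have hNpos : (0:ℝ) < N := by linarith
  have hε0 : 0 < ε := lt_of_lt_of_le (by positivity) hε1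
  set S := Real.sqrt ((J * (N - J + 1)) / ((N - 2*J + 2) * (N - 2*J))) with hSdef
  have hS0 : 0 ≤ S := Real.sqrt_nonneg _
  set t := Real.sqrt (N * K) with ht
  have htpos : 0 < t := Real.sqrt_pos.mpr (by positivity)
  set s := Real.sqrt (1 + ε) with hs
  have hspos : 0 < s := Real.sqrt_pos.mpr (by linarith)
  have hs1 : 1 ≤ s := by
    have := Real.sqrt_le_sqrt (show (1:ℝ) ≤ 1+ε by linarith)
    rwa [Real.sqrt_one] at this
  have hs2 : s ≤ 1 + ε/2 := by
    have := Real.sqrt_le_sqrt (show 1+ε ≤ (1+ε/2)^2 by nlinarith)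
    rwa [Real.sqrt_sq (by linarith)] at this
  have hsq : Real.sqrt (N * ((1+ε)*K)) = s * t := by
    rw [show N * ((1+ε)*K) = (1+ε) * (N*K) by ring, Real.sqrt_mul (by linarith)]
  rw [hsq, ← sub_mul, abs_mul, abs_of_nonneg hS0]
  have hD : (N - 2*((1+ε)*K))/(s*t) - (N-2*K)/t
      = ((N-2*K)*(1-s) - 2*ε*K)/(s*t) := by
    field_simp
    ring
  have hNKle : 25*J ≤ N := by linarith
  have habsD : |(N - 2*((1+ε)*K))/(s*t) - (N-2*K)/t| ≤ ε*N/t := by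
    rw [hD, abs_div, abs_of_pos (mul_pos hspos htpos)]
    have hNK2 : (0:ℝ) ≤ N - 2*K := by linarith
    have hnum : |(N-2*K)*(1-s) - 2*ε*K| ≤ ε*N := by
      rw [abs_le]
      constructor <;>
        nlinarith [mul_nonneg hNK2 (show (0:ℝ) ≤ s-1 by linarith),
          mul_le_mul_of_nonneg_left (show s-1 ≤ ε/2 by linarith) hNK2]
    calc |(N-2*K)*(1-s) - 2*ε*K| / (s*t) ≤ (ε*N)/(s*t) := by
          gcongr
      _ ≤ ε*N/t := div_le_div_of_nonneg_left (by positivity) htpos (by nlinarith)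
  have hden : 0 < (N - 2*J + 2) * (N - 2*J) := by nlinarith
  have hS_le : S ≤ 2 * Real.sqrt (J/N) := by
    rw [hSdef, show (2:ℝ) * Real.sqrt (J/N) = Real.sqrt (4*(J/N)) by
      rw [Real.sqrt_mul (by norm_num), show (4:ℝ) = 2^2 by norm_num, Real.sqrt_sq (by norm_num)]]
    apply Real.sqrt_le_sqrt
    rw [show (4:ℝ)*(J/N) = (4*J)/N by ring, div_le_div_iff₀ hden hNpos]
    have hbr : N*(N-J+1) ≤ 4*((N-2*J+2)*(N-2*J)) := by
      nlinarith [mul_nonneg hNpos.le (show (0:ℝ) ≤ N - 5*J by linarith), mul_nonneg hJ0 hJ0]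
    calc J*(N-J+1)*N = J*(N*(N-J+1)) := by ring
      _ ≤ J*(4*((N-2*J+2)*(N-2*J))) := mul_le_mul_of_nonneg_left hbr hJ0
      _ = 4*J*((N-2*J+2)*(N-2*J)) := by ring
  have hmain : |(N - 2*((1+ε)*K))/(s*t) - (N-2*K)/t| * S
      ≤ (ε*N/t) * (2*Real.sqrt (J/N)) :=
    mul_le_mul habsD hS_le hS0 (by positivity)
  refine hmain.trans ?_
  have heq : (ε*N/t) * (2*Real.sqrt (J/N)) = 2*ε*Real.sqrt (J/K) := by
    have h1 : N * Real.sqrt (J/N) = Real.sqrt (N*J) := by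
      rw [show N*Real.sqrt (J/N) = Real.sqrt (N^2) * Real.sqrt (J/N) from by
        rw [Real.sqrt_sq hNpos.le], ← Real.sqrt_mul (by positivity)]
      congr 1
      field_simp
    have h2 : Real.sqrt (N*J) / t = Real.sqrt (J/K) := by
      rw [ht, ← Real.sqrt_div (by positivity), mul_div_mul_left _ _ (ne_of_gt hNpos)]
    calc (ε*N/t) * (2*Real.sqrt (J/N)) = 2*ε*(N * Real.sqrt (J/N) / t) := by ring
      _ = 2*ε*Real.sqrt (J/K) := by rw [h1, h2]
  rw [heq]
  have : 0 ≤ Real.sqrt (J/K) := Real.sqrt_nonneg _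
  nlinarith


/-- `|φ_{j,2}(k′) − φ_{j,2}(k)| ≤ C·ε·sqrt(j/k)` where `k′ = (1+ε)k`. -/
theorem phi2_difference_bound :
    ∃ C : ℝ, 0 < C ∧ ∀ (n k j : ℤ) (ε : ℝ),
      1 ≤ k → 5 * k ≤ n → 0 ≤ j → 5 * j ≤ k → 1 / (k : ℝ) ≤ ε → ε ≤ 1 →
      |phi2 n j ((1 + ε) * (k : ℝ)) - phi2 n j (k : ℝ)| ≤
        C * ε * Real.sqrt ((j : ℝ) / (k : ℝ)) := by
  refine ⟨10, by norm_num, ?_⟩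
  intro n k j ε hk hn hj hjk hε1 hε2
  have := phi2_aux (n:ℝ) (k:ℝ) (j:ℝ) ε (by exact_mod_cast hk)
    (by exact_mod_cast hn) (by exact_mod_cast hj) (by exact_mod_cast hjk) hε1 hε2
  simpa [phi2, mul_assoc] using this
end

section
/- There exists a universal constant C > 0 such that for all integers n, k, j with k ≥ 1, n ≥ 5k, 0 ≤ 5j ≤ k, and every real ε with 1/k ≤ ε ≤ 1, setting k' = (1+ε)k, one has |φ_{j,3}(k') − φ_{j,3}(k)| ≤ C·ε·( j/k + k/n ), where φ_{j,3}(κ) = sqrt((n−j+1)(κ−j)(n−κ−j)/((n−2j+1)(n−2j)κ)). -/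
set_option maxHeartbeats 1000000

lemma sqrt_diff_le_two (a b : ℝ) (ha : 0 ≤ a) (hb : (1:ℝ)/4 ≤ b) :
    |Real.sqrt a - Real.sqrt b| ≤ 2 * |a - b| := by
  have hb0 : (0:ℝ) ≤ b := le_trans (by norm_num) hb
  have hsb : (1:ℝ)/2 ≤ Real.sqrt b := by
    have : Real.sqrt (1/4) ≤ Real.sqrt b := Real.sqrt_le_sqrt hb
    rwa [show (1:ℝ)/4 = (1/2)^2 by norm_num, Real.sqrt_sq (by norm_num : (0:ℝ) ≤ 1/2)] at this
  have key : |Real.sqrt a - Real.sqrt b| * (Real.sqrt a + Real.sqrt b) = |a - b| := by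
    rw [← abs_of_nonneg (add_nonneg (Real.sqrt_nonneg a) (Real.sqrt_nonneg b)), ← abs_mul]
    congr 1
    linear_combination Real.sq_sqrt ha - Real.sq_sqrt hb0
  nlinarith [abs_nonneg (Real.sqrt a - Real.sqrt b), Real.sqrt_nonneg a]

lemma arg_nonneg (N K J ε : ℝ) (hK : 1 ≤ K) (hN : 5*K ≤ N) (hJ : 0 ≤ J) (hJK : 5*J ≤ K)
    (hε1 : 1/K ≤ ε) (hε2 : ε ≤ 1) :
    0 ≤ ((N - J + 1) * ((1+ε)*K - J) * (N - (1+ε)*K - J)) /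
      ((N - 2*J + 1) * (N - 2*J) * ((1+ε)*K)) := by
  have hK0 : (0:ℝ) < K := lt_of_lt_of_le one_pos hK
  have hε0 : 0 < ε := lt_of_lt_of_le (by positivity) hε1
  apply div_nonneg
  · apply mul_nonneg (mul_nonneg (by nlinarith) (by nlinarith))
    nlinarith
  · apply mul_nonneg (mul_nonneg (by nlinarith) (by nlinarith))
    nlinarith

lemma arg_lb (N K J : ℝ) (hK : 1 ≤ K) (hN : 5*K ≤ N) (hJ : 0 ≤ J) (hJK : 5*J ≤ K) :
    (1:ℝ)/4 ≤ ((N - J + 1) * (K - J) * (N - K - J)) / ((N - 2*J + 1) * (N - 2*J) * K) := by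
  have hK0 : (0:ℝ) < K := lt_of_lt_of_le one_pos hK
  have hN0 : (0:ℝ) < N := by linarith
  have hD0 : 0 < N - 2*J := by linarith
  have hD0' : 0 < N - 2*J + 1 := by linarith
  rw [le_div_iff₀ (by positivity)]
  have h3 : (19/25)*N ≤ N - K - J := by linarith
  have A : (N-2*J+1) * ((4/5)*K * ((19/25)*N)) ≤ (N-J+1) * ((K-J)*(N-K-J)) :=
    mul_le_mul (by linarith) (mul_le_mul (by linarith) h3 (by positivity) (by linarith))
      (mul_nonneg (by positivity) (by positivity)) (by linarith)
  have B : (N-2*J)*K ≤ N*K := by nlinarith [mul_nonneg hJ hK0.le]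
  nlinarith [A, mul_le_mul_of_nonneg_left B hD0'.le,
    mul_nonneg (mul_nonneg hD0'.le hK0.le) hN0.le]

lemma core (N K J ε : ℝ) (hK : 1 ≤ K) (hN : 5*K ≤ N) (hJ : 0 ≤ J) (hJK : 5*J ≤ K)
    (hε1 : 1/K ≤ ε) (hε2 : ε ≤ 1) :
    |((N - J + 1) * ((1+ε)*K - J) * (N - (1+ε)*K - J)) / ((N - 2*J + 1) * (N - 2*J) * ((1+ε)*K))
     - ((N - J + 1) * (K - J) * (N - K - J)) / ((N - 2*J + 1) * (N - 2*J) * K)|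
      ≤ 2 * ε * (J / K + K / N) := by
  have hK0 : (0:ℝ) < K := lt_of_lt_of_le one_pos hK
  have hε0 : 0 < ε := lt_of_lt_of_le (by positivity) hε1
  have hN5 : (5:ℝ) ≤ N := by linarith
  have hN0 : (0:ℝ) < N := by linarith
  set K' : ℝ := (1+ε)*K with hK'
  have hKK' : K ≤ K' := by nlinarith
  have hK'2 : K' ≤ 2*K := by nlinarith
  have hK'0 : 0 < K' := by nlinarith
  have hJN : 25*J ≤ N := by linarith
  have hD1 : (23/25)*N ≤ N - 2*J := by linarith
  have hD0 : 0 < N - 2*J := by linarith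
  have hD0' : 0 < N - 2*J + 1 := by linarith
  have hDpos : 0 < (N - 2*J + 1) * (N - 2*J) * K' := by positivity
  -- identity
  have hid : ((N - J + 1) * (K' - J) * (N - K' - J)) / ((N - 2*J + 1) * (N - 2*J) * K')
      - ((N - J + 1) * (K - J) * (N - K - J)) / ((N - 2*J + 1) * (N - 2*J) * K)
      = (N - J + 1) * ε * (J*(N-J) - K*K') / ((N - 2*J + 1) * (N - 2*J) * K') := by
    have hne1 : (N - 2*J + 1) * (N - 2*J) * K' ≠ 0 := by positivity
    have hne2 : (N - 2*J + 1) * (N - 2*J) * K ≠ 0 := by positivity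
    rw [div_sub_div _ _ hne1 hne2, div_eq_div_iff (by positivity) (by positivity), hK']
    ring
  rw [hid, abs_div, abs_of_pos hDpos, div_le_iff₀ hDpos]
  have hRHS : 2 * ε * (J / K + K / N) * ((N - 2*J + 1) * (N - 2*J) * K')
      = 2 * ε * (J*N + K*K) * ((N - 2*J + 1) * (N - 2*J) * K') / (K * N) := by
    field_simp
  rw [hRHS, le_div_iff₀ (by positivity : (0:ℝ) < K * N)]
  have habs : |(N - J + 1) * ε * (J*(N-J) - K*K')| ≤ (N - J + 1) * ε * (J*N + K*K') := by
    rw [abs_mul, abs_mul, abs_of_nonneg (by linarith : (0:ℝ) ≤ N - J + 1), abs_of_nonneg hε0.le]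
    have : |J*(N-J) - K*K'| ≤ J*N + K*K' := by
      rw [abs_sub_le_iff]
      constructor <;> nlinarith
    nlinarith [mul_nonneg (by linarith : (0:ℝ) ≤ N - J + 1) hε0.le]
  have h1 : N - J + 1 ≤ (6/5)*N := by linarith
  have h4 : (J*N + K*K')*K ≤ (J*N + K*K)*K' := by nlinarith [mul_nonneg (mul_nonneg hJ hN0.le) (sub_nonneg.2 hKK')]
  have h2 : (529/625)*N^2 ≤ (N - 2*J + 1) * (N - 2*J) := by nlinarith
  have final : (N - J + 1) * (J*N + K*K') * (K * N) ≤ 2 * (J*N + K*K) * ((N - 2*J + 1) * (N - 2*J) * K') := by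
    have p1 : 0 ≤ J*N + K*K' := by positivity
    have p2 : 0 ≤ J*N + K*K := by positivity
    calc (N - J + 1) * (J*N + K*K') * (K * N) ≤ ((6/5)*N) * (J*N + K*K') * (K * N) := by
          nlinarith [mul_nonneg (mul_nonneg p1 hK0.le) hN0.le]
      _ = (6/5) * ((J*N + K*K')*K) * N^2 := by ring
      _ ≤ (6/5) * ((J*N + K*K)*K') * N^2 := by nlinarith [sq_nonneg N]
      _ ≤ 2 * (J*N + K*K) * ((N - 2*J + 1) * (N - 2*J) * K') := by
          nlinarith [mul_le_mul_of_nonneg_left h2 (by positivity : (0:ℝ) ≤ 2*(J*N+K*K)*K'), sq_nonneg N]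
  calc |(N - J + 1) * ε * (J*(N-J) - K*K')| * (K * N)
      ≤ ((N - J + 1) * ε * (J*N + K*K')) * (K * N) := by
        exact mul_le_mul_of_nonneg_right habs (by positivity)
    _ ≤ 2 * ε * (J*N + K*K) * ((N - 2*J + 1) * (N - 2*J) * K') := by
        nlinarith [mul_le_mul_of_nonneg_left final hε0.le]

/-- `|φ_{j,3}(k') − φ_{j,3}(k)| ≤ C·ε·( j/k + k/n )` where `k' = (1+ε)k`. -/
theorem phi3_difference_bound :
    ∃ C : ℝ, 0 < C ∧ ∀ (n k j : ℤ) (ε : ℝ),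
      1 ≤ k → 5 * k ≤ n → 0 ≤ j → 5 * j ≤ k → 1 / (k : ℝ) ≤ ε → ε ≤ 1 →
      |phi3 n j ((1 + ε) * (k : ℝ)) - phi3 n j (k : ℝ)| ≤
        C * ε * ((j : ℝ) / (k : ℝ) + (k : ℝ) / (n : ℝ)) := by
  refine ⟨4, by norm_num, ?_⟩
  intro n k j ε hk hn hj hjk hε1 hε2
  have hK : (1:ℝ) ≤ (k:ℝ) := by exact_mod_cast hk
  have hN : 5 * (k:ℝ) ≤ (n:ℝ) := by exact_mod_cast hn
  have hJ : (0:ℝ) ≤ (j:ℝ) := by exact_mod_cast hj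
  have hJK : 5 * (j:ℝ) ≤ (k:ℝ) := by exact_mod_cast hjk
  simp only [phi3]
  calc |Real.sqrt ((((n:ℝ) - (j:ℝ) + 1) * ((1 + ε) * (k:ℝ) - (j:ℝ)) *
            ((n:ℝ) - (1 + ε) * (k:ℝ) - (j:ℝ))) /
          (((n:ℝ) - 2 * (j:ℝ) + 1) * ((n:ℝ) - 2 * (j:ℝ)) * ((1 + ε) * (k:ℝ)))) -
        Real.sqrt ((((n:ℝ) - (j:ℝ) + 1) * ((k:ℝ) - (j:ℝ)) * ((n:ℝ) - (k:ℝ) - (j:ℝ))) /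
          (((n:ℝ) - 2 * (j:ℝ) + 1) * ((n:ℝ) - 2 * (j:ℝ)) * (k:ℝ)))|
      ≤ 2 * |(((n:ℝ) - (j:ℝ) + 1) * ((1 + ε) * (k:ℝ) - (j:ℝ)) *
            ((n:ℝ) - (1 + ε) * (k:ℝ) - (j:ℝ))) /
          (((n:ℝ) - 2 * (j:ℝ) + 1) * ((n:ℝ) - 2 * (j:ℝ)) * ((1 + ε) * (k:ℝ))) -
          (((n:ℝ) - (j:ℝ) + 1) * ((k:ℝ) - (j:ℝ)) * ((n:ℝ) - (k:ℝ) - (j:ℝ))) /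
          (((n:ℝ) - 2 * (j:ℝ) + 1) * ((n:ℝ) - 2 * (j:ℝ)) * (k:ℝ))| :=
        sqrt_diff_le_two _ _ (arg_nonneg _ _ _ _ hK hN hJ hJK hε1 hε2)
          (arg_lb _ _ _ hK hN hJ hJK)
    _ ≤ 2 * (2 * ε * ((j:ℝ) / (k:ℝ) + (k:ℝ) / (n:ℝ))) := by
        have := core (n:ℝ) (k:ℝ) (j:ℝ) ε hK hN hJ hJK hε1 hε2
        linarith
    _ = 4 * ε * ((j:ℝ) / (k:ℝ) + (k:ℝ) / (n:ℝ)) := by ring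
end

section
/- There exists a universal constant C > 0 such that for all integers n, k, j with k ≥ 1, n ≥ 5k, 0 ≤ 5j ≤ k, and every real ε with 1/k ≤ ε ≤ 1, setting k' = (1+ε)k, the vectors φ_j = (φ_{j,0}(k), φ_{j,1}(k), φ_{j,2}(k), φ_{j,3}(k)) and φ'_j = (φ_{j,0}(k'), φ_{j,1}(k'), φ_{j,2}(k'), φ_{j,3}(k')) in ℝ⁴ satisfy ‖φ_j − φ'_j‖² ≤ C·ε²·( j/k + k/n ). -/
set_option maxHeartbeats 1000000

/-- The vector `φ_j(κ) = (φ_{j,0}(κ), φ_{j,1}(κ), φ_{j,2}(κ), φ_{j,3}(κ)) ∈ ℝ⁴`. -/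
noncomputable def phiVec (n j : ℤ) (κ : ℝ) : EuclideanSpace ℝ (Fin 4) :=
  (WithLp.equiv 2 (Fin 4 → ℝ)).symm ![phi0 n j κ, phi1 n κ, phi2 n j κ, phi3 n j κ]

lemma sqrt_sub_sq_le {a b : ℝ} (ha : 0 ≤ a) (hb : 0 < b) :
    (Real.sqrt a - Real.sqrt b)^2 ≤ (a-b)^2/b := by
  rw [le_div_iff₀ hb]
  have h1 : Real.sqrt a ^ 2 = a := Real.sq_sqrt ha
  have h2 : Real.sqrt b ^ 2 = b := Real.sq_sqrt hb.le
  nlinarith [Real.sqrt_nonneg a, Real.sqrt_nonneg b,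
    sq_nonneg (Real.sqrt a - Real.sqrt b), sq_nonneg (Real.sqrt a + Real.sqrt b),
    mul_nonneg (sq_nonneg (Real.sqrt a - Real.sqrt b))
      (mul_nonneg (Real.sqrt_nonneg a) (Real.sqrt_nonneg b))]

lemma genA (M c d D K ε B : ℝ) (hM : 0 < M) (hD : 0 < D) (hK : 0 < K)
    (hε0 : 0 ≤ ε) (hKc : 0 < K + c) (hdK : 0 < d - K)
    (hKc' : 0 ≤ (1+ε)*K + c) (hdK' : 0 ≤ d - (1+ε)*K)
    (hB : |c*d| ≤ B) :
    (Real.sqrt (M*((1+ε)*K+c)*(d-(1+ε)*K)/(D*((1+ε)*K))) -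
      Real.sqrt (M*(K+c)*(d-K)/(D*K)))^2 ≤
    M*ε^2*(K^2+B)^2/(D*K*((K+c)*(d-K))) := by
  have h1ε : (0:ℝ) < 1+ε := by linarith
  have hK' : 0 < (1+ε)*K := mul_pos h1ε hK
  have hApos : 0 < M*(K+c)*(d-K)/(D*K) :=
    div_pos (mul_pos (mul_pos hM hKc) hdK) (mul_pos hD hK)
  have hA'nn : 0 ≤ M*((1+ε)*K+c)*(d-(1+ε)*K)/(D*((1+ε)*K)) :=
    div_nonneg (mul_nonneg (mul_nonneg hM.le hKc') hdK') (mul_pos hD hK').le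
  have h1 := sqrt_sub_sq_le hA'nn hApos
  have hBnn : 0 ≤ B := le_trans (abs_nonneg _) hB
  have habs := abs_le.1 hB
  have hDne := hD.ne'
  have hKne := hK.ne'
  have hK'ne := hK'.ne'
  have hdiff : M*((1+ε)*K+c)*(d-(1+ε)*K)/(D*((1+ε)*K)) - M*(K+c)*(d-K)/(D*K)
      = -(M*ε*((1+ε)*K^2 + c*d))/(D*((1+ε)*K)) := by
    field_simp
    ring
  have hsq : ((1+ε)*K^2 + c*d)^2 ≤ ((1+ε)*(K^2+B))^2 := by
    apply sq_le_sq' <;>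
      nlinarith [sq_nonneg K, mul_nonneg hε0 hBnn, mul_nonneg hε0 (sq_nonneg K), habs.1, habs.2]
  have h2 : (M*((1+ε)*K+c)*(d-(1+ε)*K)/(D*((1+ε)*K)) - M*(K+c)*(d-K)/(D*K))^2
      ≤ M^2*ε^2*(K^2+B)^2/(D^2*K^2) := by
    rw [hdiff, div_pow, neg_sq, div_le_div_iff₀ (by positivity) (by positivity)]
    nlinarith [mul_le_mul_of_nonneg_left hsq
      (show (0:ℝ) ≤ M^2*ε^2*D^2*K^2 by positivity)]
  calc (Real.sqrt (M*((1+ε)*K+c)*(d-(1+ε)*K)/(D*((1+ε)*K))) -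
      Real.sqrt (M*(K+c)*(d-K)/(D*K)))^2
      ≤ (M*((1+ε)*K+c)*(d-(1+ε)*K)/(D*((1+ε)*K)) - M*(K+c)*(d-K)/(D*K))^2
          / (M*(K+c)*(d-K)/(D*K)) := h1
    _ ≤ (M^2*ε^2*(K^2+B)^2/(D^2*K^2)) / (M*(K+c)*(d-K)/(D*K)) :=
        (div_le_div_iff_of_pos_right hApos).2 h2
    _ = M*ε^2*(K^2+B)^2/(D*K*((K+c)*(d-K))) := by
        rw [div_div_div_eq]
        rw [div_eq_div_iff (by positivity) (by positivity)]
        ring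

section Bounds

variable {N K J ε : ℝ}

lemma bound0 (hK : 1 ≤ K) (hN : 5*K ≤ N) (hJ : 0 ≤ J) (hJK : 5*J ≤ K)
    (hJ01 : J = 0 ∨ 1 ≤ J) (hε0 : 0 ≤ ε) (hε1 : ε ≤ 1) :
    (Real.sqrt ((J * (K - J + 1) * (N - K - J + 1)) / ((N - 2*J + 2) * (N - 2*J + 1) * K)) -
     Real.sqrt ((J * ((1+ε)*K - J + 1) * (N - (1+ε)*K - J + 1)) /
       ((N - 2*J + 2) * (N - 2*J + 1) * ((1+ε)*K))))^2 ≤ 50*ε^2*(J/K) := by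
  have hK0 : (0:ℝ) < K := by linarith
  have hN0 : (0:ℝ) < N := by linarith
  rcases hJ01 with hJ0 | hJ1
  · simp [hJ0]
  · have hM : 0 < J := by linarith
    have hD : 0 < (N - 2*J + 2) * (N - 2*J + 1) := by nlinarith
    have hKc : 0 < K + (1 - J) := by linarith
    have hdK : 0 < (N - J + 1) - K := by linarith
    have hKc' : 0 ≤ (1+ε)*K + (1 - J) := by nlinarith
    have hdK' : 0 ≤ (N - J + 1) - (1+ε)*K := by nlinarith
    have hB : |(1 - J) * (N - J + 1)| ≤ J*N := by
      rw [abs_le]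
      constructor <;> nlinarith [sq_nonneg (J-1)]
    have g := genA J (1-J) (N-J+1) ((N - 2*J + 2) * (N - 2*J + 1)) K ε (J*N)
      hM hD hK0 hε0 hKc hdK hKc' hdK' hB
    have e1 : J*((1+ε)*K+(1-J))*((N-J+1)-(1+ε)*K)/((N - 2*J + 2) * (N - 2*J + 1)*((1+ε)*K))
        = (J * ((1+ε)*K - J + 1) * (N - (1+ε)*K - J + 1)) /
          ((N - 2*J + 2) * (N - 2*J + 1) * ((1+ε)*K)) := by ring_nf
    have e2 : J*(K+(1-J))*((N-J+1)-K)/((N - 2*J + 2) * (N - 2*J + 1)*K)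
        = (J * (K - J + 1) * (N - K - J + 1)) / ((N - 2*J + 2) * (N - 2*J + 1) * K) := by
      ring_nf
    rw [e1, e2] at g
    have hswap : (Real.sqrt ((J * (K - J + 1) * (N - K - J + 1)) / ((N - 2*J + 2) * (N - 2*J + 1) * K)) -
        Real.sqrt ((J * ((1+ε)*K - J + 1) * (N - (1+ε)*K - J + 1)) /
        ((N - 2*J + 2) * (N - 2*J + 1) * ((1+ε)*K))))^2
        = (Real.sqrt ((J * ((1+ε)*K - J + 1) * (N - (1+ε)*K - J + 1)) /
        ((N - 2*J + 2) * (N - 2*J + 1) * ((1+ε)*K))) -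
        Real.sqrt ((J * (K - J + 1) * (N - K - J + 1)) / ((N - 2*J + 2) * (N - 2*J + 1) * K)))^2 := by
      ring
    rw [hswap]
    refine le_trans g ?_
    -- final arithmetic
    have key0 : (K^2+J*N)^2 ≤ 50*(((N - 2*J + 2) * (N - 2*J + 1))*((K+(1-J))*((N-J+1)-K))) := by
      have hq1 : (4/5)*N ≤ N - 2*J + 2 := by linarith
      have hq1' : (4/5)*N ≤ N - 2*J + 1 := by linarith
      have hq2 : (4/5)*K ≤ K + (1 - J) := by linarith
      have hq3 : N/2 ≤ (N - J + 1) - K := by linarith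
      have hp1 : ((4/5)*N)*((4/5)*N) ≤ (N - 2*J + 2) * (N - 2*J + 1) :=
        mul_le_mul hq1 hq1' (by positivity) (by linarith)
      have hp2 : ((4/5)*K)*(N/2) ≤ (K+(1-J))*((N-J+1)-K) :=
        mul_le_mul hq2 hq3 (by positivity) (by linarith)
      have hp3 : (((4/5)*N)*((4/5)*N))*(((4/5)*K)*(N/2))
          ≤ ((N - 2*J + 2) * (N - 2*J + 1))*((K+(1-J))*((N-J+1)-K)) :=
        mul_le_mul hp1 hp2 (by positivity) (le_trans (by positivity) hp1)
      have hsum : K^2+J*N ≤ 2*(K*N)/5 := by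
        nlinarith [mul_le_mul_of_nonneg_left hN hK0.le, mul_le_mul_of_nonneg_left hJK hN0.le]
      have hsq2 : (K^2+J*N)^2 ≤ (2*(K*N)/5)^2 :=
        pow_le_pow_left₀ (by positivity) hsum 2
      have hmono : (0:ℝ) ≤ K*N^2*(N-K) :=
        mul_nonneg (by positivity) (by linarith)
      linarith [hp3, hsq2, hmono, mul_nonneg hK0.le (show (0:ℝ) ≤ N^3 by positivity)]
    rw [show 50*ε^2*(J/K) = (50*ε^2*J)/K from by ring,
      div_le_div_iff₀ (by positivity) hK0]
    have hfin := mul_le_mul_of_nonneg_left key0 (show (0:ℝ) ≤ ε^2*J*K by positivity)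
    linarith [hfin]

lemma bound1 (hK : 1 ≤ K) (hN : 5*K ≤ N) (hε0 : 0 ≤ ε) :
    (Real.sqrt (K/N) - Real.sqrt ((1+ε)*K/N))^2 ≤ ε^2*(K/N) := by
  have hK0 : (0:ℝ) < K := by linarith
  have hN0 : (0:ℝ) < N := by linarith
  have h1ε : (0:ℝ) < 1+ε := by linarith
  have hb : (0:ℝ) < K/N := by positivity
  have ha : (0:ℝ) ≤ (1+ε)*K/N := by positivity
  have h := sqrt_sub_sq_le ha hb
  have hswap : (Real.sqrt (K/N) - Real.sqrt ((1+ε)*K/N))^2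
      = (Real.sqrt ((1+ε)*K/N) - Real.sqrt (K/N))^2 := by ring
  rw [hswap]
  refine le_trans h (le_of_eq ?_)
  field_simp
  ring

lemma bound3 (hK : 1 ≤ K) (hN : 5*K ≤ N) (hJ : 0 ≤ J) (hJK : 5*J ≤ K)
    (hε0 : 0 ≤ ε) (hε1 : ε ≤ 1) :
    (Real.sqrt (((N - J + 1) * (K - J) * (N - K - J)) / ((N - 2*J + 1) * (N - 2*J) * K)) -
     Real.sqrt (((N - J + 1) * ((1+ε)*K - J) * (N - (1+ε)*K - J)) /
       ((N - 2*J + 1) * (N - 2*J) * ((1+ε)*K))))^2 ≤ 50*ε^2*(J/K + K/N) := by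
  have hK0 : (0:ℝ) < K := by linarith
  have hN0 : (0:ℝ) < N := by linarith
  have hM : 0 < N - J + 1 := by linarith
  have hD : 0 < (N - 2*J + 1) * (N - 2*J) := by nlinarith
  have hKc : 0 < K + (-J) := by linarith
  have hdK : 0 < (N - J) - K := by linarith
  have hKc' : 0 ≤ (1+ε)*K + (-J) := by nlinarith
  have hdK' : 0 ≤ (N - J) - (1+ε)*K := by nlinarith
  have hB : |(-J) * (N - J)| ≤ J*N := by
    rw [abs_le]
    constructor <;> nlinarith [sq_nonneg J]
  have g := genA (N-J+1) (-J) (N-J) ((N - 2*J + 1) * (N - 2*J)) K ε (J*N)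
    hM hD hK0 hε0 hKc hdK hKc' hdK' hB
  have e1 : (N-J+1)*((1+ε)*K+(-J))*((N-J)-(1+ε)*K)/((N - 2*J + 1) * (N - 2*J)*((1+ε)*K))
      = ((N - J + 1) * ((1+ε)*K - J) * (N - (1+ε)*K - J)) /
        ((N - 2*J + 1) * (N - 2*J) * ((1+ε)*K)) := by ring_nf
  have e2 : (N-J+1)*(K+(-J))*((N-J)-K)/((N - 2*J + 1) * (N - 2*J)*K)
      = ((N - J + 1) * (K - J) * (N - K - J)) / ((N - 2*J + 1) * (N - 2*J) * K) := by ring_nf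
  rw [e1, e2] at g
  have hswap : (Real.sqrt (((N - J + 1) * (K - J) * (N - K - J)) / ((N - 2*J + 1) * (N - 2*J) * K)) -
      Real.sqrt (((N - J + 1) * ((1+ε)*K - J) * (N - (1+ε)*K - J)) /
      ((N - 2*J + 1) * (N - 2*J) * ((1+ε)*K))))^2
      = (Real.sqrt (((N - J + 1) * ((1+ε)*K - J) * (N - (1+ε)*K - J)) /
      ((N - 2*J + 1) * (N - 2*J) * ((1+ε)*K))) -
      Real.sqrt (((N - J + 1) * (K - J) * (N - K - J)) / ((N - 2*J + 1) * (N - 2*J) * K)))^2 := by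
    ring
  rw [hswap]
  refine le_trans g ?_
  have key3 : (N-J+1)*(K^2+J*N)^2*(K*N)
      ≤ 50*(J*N+K^2)*(((N - 2*J + 1) * (N - 2*J))*K*((K+(-J))*((N-J)-K))) := by
    have hq1 : (4/5)*N ≤ N - 2*J + 1 := by linarith
    have hq1' : (4/5)*N ≤ N - 2*J := by linarith
    have hq2 : (4/5)*K ≤ K + (-J) := by linarith
    have hq3 : N/2 ≤ (N - J) - K := by linarith
    have hp1 : ((4/5)*N)*((4/5)*N) ≤ (N - 2*J + 1) * (N - 2*J) :=
      mul_le_mul hq1 hq1' (by positivity) (by linarith)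
    have hp2 : ((4/5)*K)*(N/2) ≤ (K+(-J))*((N-J)-K) :=
      mul_le_mul hq2 hq3 (by positivity) (by linarith)
    have hp3 : (((4/5)*N)*((4/5)*N))*(K*(((4/5)*K)*(N/2)))
        ≤ ((N - 2*J + 1) * (N - 2*J))*(K*((K+(-J))*((N-J)-K))) :=
      mul_le_mul hp1 (mul_le_mul_of_nonneg_left hp2 hK0.le) (by positivity)
        (le_trans (by positivity) hp1)
    have hexp : (K^2+J*N)^2 ≤ 2*K^4+2*J^2*N^2 := by nlinarith [sq_nonneg (K^2 - J*N)]
    have hNJ1 : N - J + 1 ≤ 2*N := by linarith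
    have hL1 : (N-J+1)*(K^2+J*N)^2 ≤ 2*N*(2*K^4+2*J^2*N^2) :=
      mul_le_mul hNJ1 hexp (by positivity) (by positivity)
    have hL2 : (N-J+1)*(K^2+J*N)^2*(K*N) ≤ 2*N*(2*K^4+2*J^2*N^2)*(K*N) :=
      mul_le_mul_of_nonneg_right hL1 (by positivity)
    have hR1 := mul_le_mul_of_nonneg_left hp3 (show (0:ℝ) ≤ 50*(J*N+K^2) by positivity)
    have hm1 : (0:ℝ) ≤ K^4*N^2*(N-K) := mul_nonneg (by positivity) (by linarith)
    have hm2 : (0:ℝ) ≤ K*N^4*(J*(K-J)) :=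
      mul_nonneg (by positivity) (mul_nonneg hJ (by linarith))
    have hm3 : (0:ℝ) ≤ (J*N)*(K^2*N^3) := by positivity
    have hm4 : (0:ℝ) ≤ (K^2)*(K^2*N^3) := by positivity
    linarith [hL2, hR1, hm1, hm2, hm3, hm4]
  have heq : J/K + K/N = (J*N+K^2)/(K*N) := by
    rw [div_add_div _ _ hK0.ne' hN0.ne']
    ring_nf
  rw [heq, ← mul_div_assoc, div_le_div_iff₀ (by positivity) (by positivity)]
  have hfin := mul_le_mul_of_nonneg_left key3 (show (0:ℝ) ≤ ε^2 by positivity)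
  linarith [hfin]

lemma cident {N κ : ℝ} (hN : 0 < N) (hκ : 0 < κ) :
    (N - 2*κ)/Real.sqrt (N*κ) = Real.sqrt (N/κ) - 2*Real.sqrt (κ/N) := by
  have hsN : 0 < Real.sqrt N := Real.sqrt_pos.2 hN
  have hsκ : 0 < Real.sqrt κ := Real.sqrt_pos.2 hκ
  rw [Real.sqrt_mul hN.le, Real.sqrt_div hN.le, Real.sqrt_div hκ.le]
  have h1 : Real.sqrt N * Real.sqrt N = N := Real.mul_self_sqrt hN.le
  have h2 : Real.sqrt κ * Real.sqrt κ = κ := Real.mul_self_sqrt hκ.le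
  field_simp
  linear_combination -h1 + 2*h2

lemma bound2 (hK : 1 ≤ K) (hN : 5*K ≤ N) (hJ : 0 ≤ J) (hJK : 5*J ≤ K)
    (hε0 : 0 ≤ ε) (hε1 : ε ≤ 1) :
    ((N - 2*K)/Real.sqrt (N*K) * Real.sqrt ((J*(N-J+1))/((N-2*J+2)*(N-2*J))) -
     (N - 2*((1+ε)*K))/Real.sqrt (N*((1+ε)*K)) *
       Real.sqrt ((J*(N-J+1))/((N-2*J+2)*(N-2*J))))^2 ≤ 50*ε^2*(J/K) := by
  have hK0 : (0:ℝ) < K := by linarith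
  have hN0 : (0:ℝ) < N := by linarith
  have h1ε : (0:ℝ) < 1+ε := by linarith
  have hK' : 0 < (1+ε)*K := by positivity
  have hDpos : (0:ℝ) < (N-2*J+2)*(N-2*J) := by nlinarith
  set S := Real.sqrt ((J*(N-J+1))/((N-2*J+2)*(N-2*J))) with hS
  have hSnn : 0 ≤ S := Real.sqrt_nonneg _
  have hSsq : S^2 = (J*(N-J+1))/((N-2*J+2)*(N-2*J)) :=
    Real.sq_sqrt (div_nonneg (mul_nonneg hJ (by linarith)) hDpos.le)
  have hSb : S^2 ≤ 3*J/N := by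
    rw [hSsq, div_le_div_iff₀ hDpos hN0]
    have hkey2 : (N-J+1)*N ≤ 3*((N-2*J+2)*(N-2*J)) := by nlinarith
    nlinarith [mul_le_mul_of_nonneg_left hkey2 hJ]
  rw [cident hN0 hK0, cident hN0 hK']
  set x := Real.sqrt (N/K) - Real.sqrt (N/((1+ε)*K)) with hx
  set y := Real.sqrt (K/N) - Real.sqrt ((1+ε)*K/N) with hy
  have hxb : x^2 ≤ ε^2*(N/K) := by
    have h := sqrt_sub_sq_le (show (0:ℝ) ≤ N/K by positivity)
      (show (0:ℝ) < N/((1+ε)*K) by positivity)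
    refine le_trans h ?_
    have e : N/K - N/((1+ε)*K) = ε*N/((1+ε)*K) := by field_simp; ring
    rw [e]
    have e2 : (ε*N/((1+ε)*K))^2/(N/((1+ε)*K)) = ε^2*(N/((1+ε)*K)) := by
      field_simp
    rw [e2]
    have : N/((1+ε)*K) ≤ N/K := by
      apply div_le_div_of_nonneg_left hN0.le hK0
      nlinarith
    nlinarith [sq_nonneg ε]
  have hyb : y^2 ≤ ε^2*(K/N) := by
    have h := sqrt_sub_sq_le (show (0:ℝ) ≤ (1+ε)*K/N by positivity)
      (show (0:ℝ) < K/N by positivity)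
    have hswap : y^2 = (Real.sqrt ((1+ε)*K/N) - Real.sqrt (K/N))^2 := by rw [hy]; ring
    rw [hswap]
    refine le_trans h (le_of_eq ?_)
    field_simp
    ring
  have hKN : K/N ≤ N/K := by
    rw [div_le_div_iff₀ hN0 hK0]
    nlinarith
  have hdiff2 : ((Real.sqrt (N/K) - 2*Real.sqrt (K/N)) * S -
      (Real.sqrt (N/((1+ε)*K)) - 2*Real.sqrt ((1+ε)*K/N)) * S)^2 = (x-2*y)^2*S^2 := by
    rw [hx, hy]; ring
  rw [hdiff2]
  have hxy : (x-2*y)^2 ≤ 10*(ε^2*(N/K)) := by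
    nlinarith [sq_nonneg (x+2*y), hxb, hyb, hKN, sq_nonneg ε,
      mul_le_mul_of_nonneg_left hKN (sq_nonneg ε)]
  have hprod : (x-2*y)^2*S^2 ≤ (10*(ε^2*(N/K)))*(3*J/N) :=
    mul_le_mul hxy hSb (sq_nonneg _) (by positivity)
  have heq : 10*(ε^2*(N/K))*(3*J/N) = 30*ε^2*(J/K) := by
    field_simp
    ring
  have hnn : 0 ≤ ε^2*(J/K) := mul_nonneg (sq_nonneg ε) (div_nonneg hJ hK0.le)
  rw [heq] at hprod
  linarith [hprod, hnn]

end Bounds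


/-- `‖φ_j − φ'_j‖² ≤ C·ε²·( j/k + k/n )` where `φ'_j` uses `k' = (1+ε)k`. -/
theorem phiVec_difference_bound :
    ∃ C : ℝ, 0 < C ∧ ∀ (n k j : ℤ) (ε : ℝ),
      1 ≤ k → 5 * k ≤ n → 0 ≤ j → 5 * j ≤ k → 1 / (k : ℝ) ≤ ε → ε ≤ 1 →
      ‖phiVec n j (k : ℝ) - phiVec n j ((1 + ε) * (k : ℝ))‖ ^ 2 ≤
        C * ε ^ 2 * ((j : ℝ) / (k : ℝ) + (k : ℝ) / (n : ℝ)) := by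
  refine ⟨200, by norm_num, ?_⟩
  intro n k j ε hk hn hj hjk hεk hε1
  have hK : (1:ℝ) ≤ (k:ℝ) := by exact_mod_cast hk
  have hN : 5*(k:ℝ) ≤ (n:ℝ) := by
    exact_mod_cast hn
  have hJ : (0:ℝ) ≤ (j:ℝ) := by exact_mod_cast hj
  have hJK : 5*(j:ℝ) ≤ (k:ℝ) := by
    exact_mod_cast hjk
  have hK0 : (0:ℝ) < (k:ℝ) := by linarith
  have hN0 : (0:ℝ) < (n:ℝ) := by linarith
  have hε0 : 0 ≤ ε := le_trans (by positivity) hεk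
  have hJ01 : (j:ℝ) = 0 ∨ 1 ≤ (j:ℝ) := by
    rcases eq_or_lt_of_le hj with h | h
    · left; exact_mod_cast h.symm
    · right; exact_mod_cast h
  have hnorm : ‖phiVec n j (k:ℝ) - phiVec n j ((1+ε)*(k:ℝ))‖^2 =
      (phi0 n j (k:ℝ) - phi0 n j ((1+ε)*(k:ℝ)))^2 +
      (phi1 n (k:ℝ) - phi1 n ((1+ε)*(k:ℝ)))^2 +
      (phi2 n j (k:ℝ) - phi2 n j ((1+ε)*(k:ℝ)))^2 +
      (phi3 n j (k:ℝ) - phi3 n j ((1+ε)*(k:ℝ)))^2 := by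
    simp only [phiVec]
    rw [← Real.sqrt_sq (norm_nonneg _), EuclideanSpace.norm_eq]
    rw [Real.sqrt_sq (by positivity)]
    simp only [PiLp.sub_apply, WithLp.equiv_symm_apply, WithLp.ofLp_toLp, Fin.sum_univ_four, sq_abs,
      Matrix.cons_val_zero, Matrix.cons_val_one, Matrix.head_cons, Matrix.cons_val_two,
      Matrix.tail_cons, Matrix.cons_val_three, Real.norm_eq_abs]
    rw [Real.sq_sqrt (by positivity)]
  rw [hnorm]
  have b0 := bound0 hK hN hJ hJK hJ01 hε0 hε1
  have b1 := bound1 hK hN hε0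
  have b2 := bound2 hK hN hJ hJK hε0 hε1
  have b3 := bound3 hK hN hJ hJK hε0 hε1
  simp only [phi0, phi1, phi2, phi3]
  have hnn1 : 0 ≤ ε^2*((j:ℝ)/(k:ℝ)) := mul_nonneg (sq_nonneg ε) (div_nonneg hJ hK0.le)
  have hnn2 : 0 ≤ ε^2*((k:ℝ)/(n:ℝ)) := mul_nonneg (sq_nonneg ε) (div_nonneg hK0.le hN0.le)
  linarith [b0, b1, b2, b3, hnn1, hnn2]
end

section
/- Let n, k, ℓ, t be integers with k ≥ 1, n ≥ 5k, ℓ ≥ 0, t ≥ 1, 2ℓ ≤ t, and 5t ≤ k, and let ε be real with 1/k ≤ ε ≤ 1; set k' = (1+ε)k. For 0 ≤ j ≤ k let γ_j^{(0)} = max(1 − j/t, 0), and define recursively for s ≥ 0 and 0 ≤ j ≤ k: γ_j^{(s+1)} = γ_{j−1}^{(s)}·φ_{j,0}(k)φ_{j,0}(k') + γ_j^{(s)}·(φ_{j,1}(k)φ_{j,1}(k') + φ_{j,2}(k)φ_{j,2}(k')) + γ_{j+1}^{(s)}·φ_{j,3}(k)φ_{j,3}(k'), with the conventions γ_{−1}^{(s)}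 = 0 and γ_{k+1}^{(s)} = 0. Let D = min over 0 ≤ j ≤ ℓ of the inner product ⟨φ_j, φ'_j⟩ = Σ_{i=0}^{3} φ_{j,i}(k)φ_{j,i}(k'). Then for every s with 0 ≤ s ≤ ℓ and every j with 0 ≤ j ≤ ℓ − s, one has γ_j^{(s)} ≥ D^s / 2. -/
/-- The inner product `⟨φ_j, φ'_j⟩ = Σ_{i=0}^{3} φ_{j,i}(k)·φ_{j,i}(κ')`. -/
noncomputable def phiInner (n k j : ℤ) (κ' : ℝ) : ℝ :=
  phi0 n j (k : ℝ) * phi0 n j κ' + phi1 n (k : ℝ) * phi1 n κ'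
    + phi2 n j (k : ℝ) * phi2 n j κ' + phi3 n j (k : ℝ) * phi3 n j κ'

/-- The recursively defined coefficients `γ_j^{(s)}`:
`γ_j^{(0)} = max(1 − j/t, 0)` for `0 ≤ j ≤ k`, and
`γ_j^{(s+1)} = γ_{j−1}^{(s)}·φ_{j,0}(k)φ_{j,0}(k') +
  γ_j^{(s)}·(φ_{j,1}(k)φ_{j,1}(k') + φ_{j,2}(k)φ_{j,2}(k')) +
  γ_{j+1}^{(s)}·φ_{j,3}(k)φ_{j,3}(k')`,
with the conventions `γ_{−1}^{(s)} = 0` and `γ_{k+1}^{(s)} = 0`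
(encoded here by setting the value to `0` outside the range `0 ≤ j ≤ k`). -/
noncomputable def gammaSeq (n k t : ℤ) (κ' : ℝ) : ℕ → ℤ → ℝ
  | 0 => fun j => if 0 ≤ j ∧ j ≤ k then max (1 - (j : ℝ) / (t : ℝ)) 0 else 0
  | s + 1 => fun j =>
      if 0 ≤ j ∧ j ≤ k then
        gammaSeq n k t κ' s (j - 1) * (phi0 n j (k : ℝ) * phi0 n j κ')
          + gammaSeq n k t κ' s j *
              (phi1 n (k : ℝ) * phi1 n κ' + phi2 n j (k : ℝ) * phi2 n j κ')
          + gammaSeq n k t κ' s (j + 1) * (phi3 n j (k : ℝ) * phi3 n j κ')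
      else 0

/-- If `D` is the minimum of `⟨φ_j, φ'_j⟩` over `0 ≤ j ≤ ℓ`, then for all `0 ≤ s ≤ ℓ` and
`0 ≤ j ≤ ℓ − s` we have `γ_j^{(s)} ≥ D^s / 2`. -/
theorem gammaSeq_lower_bound (n k ℓ t : ℤ) (ε : ℝ)
    (hk : 1 ≤ k) (hn : 5 * k ≤ n) (hℓ : 0 ≤ ℓ) (ht : 1 ≤ t)
    (hℓt : 2 * ℓ ≤ t) (htk : 5 * t ≤ k)
    (hε₁ : 1 / (k : ℝ) ≤ ε) (hε₂ : ε ≤ 1)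
    (D : ℝ)
    (hD : IsLeast ((fun j : ℤ => phiInner n k j ((1 + ε) * (k : ℝ))) ''
      {j : ℤ | 0 ≤ j ∧ j ≤ ℓ}) D)
    (s : ℕ) (hs : (s : ℤ) ≤ ℓ) (j : ℤ) (hj₀ : 0 ≤ j) (hj : j ≤ ℓ - (s : ℤ)) :
    D ^ s / 2 ≤ gammaSeq n k t ((1 + ε) * (k : ℝ)) s j := by
  set κ' : ℝ := (1 + ε) * (k : ℝ) with hκ'
  have hkR : (0:ℝ) < (k : ℝ) := by exact_mod_cast hk.trans_lt' (by norm_num)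
  have hnk : (2:ℝ) * (k : ℝ) ≤ (n : ℝ) := by
    have : (5:ℝ) * k ≤ n := by exact_mod_cast hn
    nlinarith
  have hnk' : (2:ℝ) * κ' ≤ (n : ℝ) := by
    have : (5:ℝ) * k ≤ n := by exact_mod_cast hn
    rw [hκ']; nlinarith
  -- nonnegativity of each φ₂
  have hphi2 : ∀ (j : ℤ) (κ : ℝ), 2 * κ ≤ (n : ℝ) → 0 ≤ phi2 n j κ := by
    intro j κ hκ
    apply mul_nonneg (div_nonneg (by linarith) (Real.sqrt_nonneg _)) (Real.sqrt_nonneg _)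
  have hcoef0 : ∀ j : ℤ, 0 ≤ phi0 n j (k : ℝ) * phi0 n j κ' :=
    fun j => mul_nonneg (Real.sqrt_nonneg _) (Real.sqrt_nonneg _)
  have hcoef1 : ∀ j : ℤ, 0 ≤ phi1 n (k : ℝ) * phi1 n κ' + phi2 n j (k : ℝ) * phi2 n j κ' :=
    fun j => add_nonneg (mul_nonneg (Real.sqrt_nonneg _) (Real.sqrt_nonneg _))
      (mul_nonneg (hphi2 j _ hnk) (hphi2 j _ hnk'))
  have hcoef3 : ∀ j : ℤ, 0 ≤ phi3 n j (k : ℝ) * phi3 n j κ' :=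
    fun j => mul_nonneg (Real.sqrt_nonneg _) (Real.sqrt_nonneg _)
  have hInner : ∀ j : ℤ, 0 ≤ phiInner n k j κ' := by
    intro j
    have := hcoef0 j
    have := hcoef1 j
    have := hcoef3 j
    unfold phiInner
    linarith
  have hD0 : 0 ≤ D := by
    obtain ⟨j0, _, hj0⟩ := hD.1
    rw [← hj0]; exact hInner j0
  clear_value κ'
  clear hκ'
  induction s generalizing j with
  | zero =>
      have hjk : j ≤ k := by linarith
      have hjl : j ≤ ℓ := by push_cast at hj; linarith
      simp only [gammaSeq, hj₀, hjk, and_self, if_true]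
      have htR : (0:ℝ) < (t : ℝ) := by exact_mod_cast ht.trans_lt' (by norm_num)
      have h2j : (2:ℝ) * (j : ℝ) ≤ (t : ℝ) := by
        have : 2 * j ≤ t := by omega
        exact_mod_cast this
      have : (j : ℝ) / (t : ℝ) ≤ 1 / 2 := by
        rw [div_le_div_iff₀ htR (by norm_num)]; linarith
      rw [le_max_iff]
      left
      simp only [pow_zero]
      linarith
  | succ s ih =>
      have hs' : (s : ℤ) ≤ ℓ := by push_cast at hs ⊢; linarith
      have hjk : j ≤ k := by push_cast at hj; linarith
      have hjl : j ≤ ℓ := by push_cast at hj; linarith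
      simp only [gammaSeq, hj₀, hjk, and_self, if_true]
      have hDs : 0 ≤ D ^ s / 2 := by positivity
      have h0 : D ^ s / 2 * (phi0 n j (k : ℝ) * phi0 n j κ') ≤
          gammaSeq n k t κ' s (j - 1) * (phi0 n j (k : ℝ) * phi0 n j κ') := by
        rcases eq_or_lt_of_le hj₀ with h | h
        · have : phi0 n j (k : ℝ) = 0 := by
            rw [← h]; simp [phi0]
          rw [this]; ring_nf; simp
        · exact mul_le_mul_of_nonneg_right
            (ih hs' (j - 1) (by omega) (by push_cast at hj ⊢; linarith)) (hcoef0 j)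
      have h1 : D ^ s / 2 * (phi1 n (k : ℝ) * phi1 n κ' + phi2 n j (k : ℝ) * phi2 n j κ') ≤
          gammaSeq n k t κ' s j *
            (phi1 n (k : ℝ) * phi1 n κ' + phi2 n j (k : ℝ) * phi2 n j κ') :=
        mul_le_mul_of_nonneg_right
          (ih hs' j hj₀ (by push_cast at hj ⊢; linarith)) (hcoef1 j)
      have h3 : D ^ s / 2 * (phi3 n j (k : ℝ) * phi3 n j κ') ≤
          gammaSeq n k t κ' s (j + 1) * (phi3 n j (k : ℝ) * phi3 n j κ') :=
        mul_le_mul_of_nonneg_right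
          (ih hs' (j + 1) (by omega) (by push_cast at hj ⊢; linarith)) (hcoef3 j)
      have hmem : D ≤ phiInner n k j κ' := hD.2 ⟨j, ⟨hj₀, hjl⟩, rfl⟩
      have key : D ^ s / 2 * phiInner n k j κ' ≤
          gammaSeq n k t κ' s (j - 1) * (phi0 n j (k : ℝ) * phi0 n j κ')
            + gammaSeq n k t κ' s j *
                (phi1 n (k : ℝ) * phi1 n κ' + phi2 n j (k : ℝ) * phi2 n j κ')
            + gammaSeq n k t κ' s (j + 1) * (phi3 n j (k : ℝ) * phi3 n j κ') := by
        unfold phiInner; linarith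
      calc D ^ (s + 1) / 2 = D ^ s / 2 * D := by ring
        _ ≤ D ^ s / 2 * phiInner n k j κ' := mul_le_mul_of_nonneg_left hmem hDs
        _ ≤ _ := key
end

section
/- There exists a universal constant C > 0 such that for all integers n, k, t, j with k ≥ 1, n ≥ 5k, t ≥ 1, 5t ≤ k, 0 ≤ j ≤ k, and every real ε with 1/k ≤ ε ≤ 1 and k' = (1+ε)k, the following holds. Set γ_i = max(1 − i/t, 0) for 0 ≤ i ≤ k, γ_{−1} = 0, γ_{k+1} = 0, and define the vectors in ℝ⁴: φ̃_j = (γ_{j−1}φ_{j,0}(k), γ_jφ_{j,1}(k), γ_jφ_{j,2}(k), γ_{j+1}φ_{j,3}(k)) and φ̃'_j = (γ_{j−1}φ_{j,0}(k'), γ_jφ_{j,1}(k'), γ_jφ_{j,2}(k'), γ_{j+1}φ_{j,3}(k')). Then ‖φ̃'_j − γ_j·φ_j‖ ≤ C·( ε·sqrt(k/n) + ε·sqrt(t/k) + 1/t ) and ‖γ_j·φ'_j − φ̃_j‖ ≤ C·( ε·sqrt(k/n) + ε·sqrt(t/k) + 1/t ), where ‖·‖ is the Euclidean norm on ℝ⁴.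 -/
set_option maxHeartbeats 1000000


/-- The coefficients `γ_i = max(1 − i/t, 0)` for `0 ≤ i ≤ k`, with `γ_{−1} = 0` and
`γ_{k+1} = 0` (encoded by value `0` outside `0 ≤ i ≤ k`). -/
noncomputable def gammaCoeff (k t : ℤ) (i : ℤ) : ℝ :=
  if 0 ≤ i ∧ i ≤ k then max (1 - (i : ℝ) / (t : ℝ)) 0 else 0

/-- The vector `φ̃_j(κ) = (γ_{j−1}φ_{j,0}(κ), γ_jφ_{j,1}(κ), γ_jφ_{j,2}(κ), γ_{j+1}φ_{j,3}(κ))`. -/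
noncomputable def phiTildeVec (n k t j : ℤ) (κ : ℝ) : EuclideanSpace ℝ (Fin 4) :=
  (WithLp.equiv 2 (Fin 4 → ℝ)).symm
    ![gammaCoeff k t (j - 1) * phi0 n j κ, gammaCoeff k t j * phi1 n κ,
      gammaCoeff k t j * phi2 n j κ, gammaCoeff k t (j + 1) * phi3 n j κ]







lemma gamma_nonneg (k t i : ℤ) : 0 ≤ gammaCoeff k t i := by
  unfold gammaCoeff; split
  · exact le_max_right _ _
  · exact le_rfl

lemma gamma_le_one (k t i : ℤ) (ht : 1 ≤ t) : gammaCoeff k t i ≤ 1 := by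
  unfold gammaCoeff; split
  · rename_i h
    have h0 : (0:ℝ) ≤ (i:ℝ) := by exact_mod_cast h.1
    have ht' : (0:ℝ) < (t:ℝ) := by exact_mod_cast ht
    have : (0:ℝ) ≤ (i:ℝ) / (t:ℝ) := div_nonneg h0 ht'.le
    apply max_le (by linarith) zero_le_one
  · exact zero_le_one

lemma gamma_pos_lt (k t j : ℤ) (ht : 1 ≤ t) (h : 0 < gammaCoeff k t j) : (j:ℝ) < (t:ℝ) := by
  unfold gammaCoeff at h
  split at h
  · have ht' : (0:ℝ) < (t:ℝ) := by exact_mod_cast ht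
    by_contra hc
    push_neg at hc
    have : (1:ℝ) - (j:ℝ)/(t:ℝ) ≤ 0 := by
      have : (1:ℝ) ≤ (j:ℝ)/(t:ℝ) := (le_div_iff₀ ht').2 (by linarith)
      linarith
    simp [max_eq_right this] at h
  · exact absurd h (lt_irrefl 0)

lemma gamma_adj_left (k t j : ℤ) (ht : 1 ≤ t) (h1 : 1 ≤ j) (h2 : j ≤ k) :
    |gammaCoeff k t (j-1) - gammaCoeff k t j| ≤ 1 / (t:ℝ) := by
  unfold gammaCoeff
  rw [if_pos ⟨by omega, by omega⟩, if_pos ⟨by omega, h2⟩]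
  have ht' : (0:ℝ) < (t:ℝ) := by exact_mod_cast ht
  calc |max (1 - ((j-1:ℤ):ℝ)/(t:ℝ)) 0 - max (1 - (j:ℝ)/(t:ℝ)) 0|
      ≤ |(1 - ((j-1:ℤ):ℝ)/(t:ℝ)) - (1 - (j:ℝ)/(t:ℝ))| := abs_max_sub_max_le_abs _ _ _
    _ = 1/(t:ℝ) := by
        push_cast
        have key : (1 - ((j:ℝ)-1)/(t:ℝ)) - (1 - (j:ℝ)/(t:ℝ)) = 1/(t:ℝ) := by
          field_simp
          ring
        rw [key, abs_of_nonneg (by positivity)]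

lemma gamma_adj_right (k t j : ℤ) (ht : 1 ≤ t) (h1 : 0 ≤ j) (h2 : j + 1 ≤ k) :
    |gammaCoeff k t (j+1) - gammaCoeff k t j| ≤ 1 / (t:ℝ) := by
  unfold gammaCoeff
  rw [if_pos ⟨by omega, h2⟩, if_pos ⟨h1, by omega⟩]
  have ht' : (0:ℝ) < (t:ℝ) := by exact_mod_cast ht
  calc |max (1 - ((j+1:ℤ):ℝ)/(t:ℝ)) 0 - max (1 - (j:ℝ)/(t:ℝ)) 0|
      ≤ |(1 - ((j+1:ℤ):ℝ)/(t:ℝ)) - (1 - (j:ℝ)/(t:ℝ))| := abs_max_sub_max_le_abs _ _ _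
    _ = 1/(t:ℝ) := by
        push_cast
        have key : (1 - ((j:ℝ)+1)/(t:ℝ)) - (1 - (j:ℝ)/(t:ℝ)) = -(1/(t:ℝ)) := by
          field_simp
          ring
        rw [key, abs_neg, abs_of_nonneg (by positivity)]

lemma gamma_top (k t : ℤ) (ht : 1 ≤ t) (htk : 5*t ≤ k) :
    gammaCoeff k t k = 0 ∧ gammaCoeff k t (k+1) = 0 := by
  constructor
  · unfold gammaCoeff
    rw [if_pos ⟨by omega, le_rfl⟩]
    have ht' : (0:ℝ) < (t:ℝ) := by exact_mod_cast ht
    have : (1:ℝ) - (k:ℝ)/(t:ℝ) ≤ 0 := by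
      have hk5 : (5:ℝ)*(t:ℝ) ≤ (k:ℝ) := by exact_mod_cast htk
      have : (1:ℝ) ≤ (k:ℝ)/(t:ℝ) := (le_div_iff₀ ht').2 (by linarith)
      linarith
    exact max_eq_right this
  · unfold gammaCoeff
    rw [if_neg (by omega)]


lemma norm_le_sum (v : EuclideanSpace ℝ (Fin 4)) :
    ‖v‖ ≤ |v 0| + |v 1| + |v 2| + |v 3| := by
  rw [EuclideanSpace.norm_eq]
  have h : ∑ i, ‖v i‖ ^ 2 ≤ (|v 0| + |v 1| + |v 2| + |v 3|)^2 := by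
    rw [Fin.sum_univ_four]
    simp only [Real.norm_eq_abs, sq_abs]
    nlinarith [abs_nonneg (v 0), abs_nonneg (v 1), abs_nonneg (v 2), abs_nonneg (v 3),
      sq_abs (v 0), sq_abs (v 1), sq_abs (v 2), sq_abs (v 3),
      abs_mul_abs_self (v 0), abs_mul_abs_self (v 1), abs_mul_abs_self (v 2),
      abs_mul_abs_self (v 3), abs_nonneg (v 0)]
  calc Real.sqrt (∑ i, ‖v i‖ ^ 2) ≤ Real.sqrt ((|v 0| + |v 1| + |v 2| + |v 3|)^2) :=
        Real.sqrt_le_sqrt h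
    _ = |v 0| + |v 1| + |v 2| + |v 3| := Real.sqrt_sq (by positivity)




lemma abs_sqrt_sub_sqrt_le {A B : ℝ} (hA : 0 ≤ A) (hB : 0 < B) :
    |Real.sqrt A - Real.sqrt B| ≤ |A - B| / Real.sqrt B := by
  have hsb : 0 < Real.sqrt B := Real.sqrt_pos.2 hB
  rw [le_div_iff₀ hsb]
  have h1 : Real.sqrt A ^ 2 = A := Real.sq_sqrt hA
  have h2 : Real.sqrt B ^ 2 = B := Real.sq_sqrt hB.le
  have hsa : 0 ≤ Real.sqrt A := Real.sqrt_nonneg A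
  rcases abs_cases (Real.sqrt A - Real.sqrt B) with ⟨he, _⟩ | ⟨he, _⟩ <;>
    rcases abs_cases (A - B) with ⟨hf, hf2⟩ | ⟨hf, hf2⟩ <;> rw [he, hf] <;> nlinarith

lemma div_sqrt_le {M B L c x : ℝ} (hM : 0 ≤ M) (hL : 0 < L) (hLB : L ≤ B)
    (hc : 0 ≤ c) (hx : 0 ≤ x) (key : M^2 ≤ c^2 * x * L) :
    M / Real.sqrt B ≤ c * Real.sqrt x := by
  have hsL : 0 < Real.sqrt L := Real.sqrt_pos.2 hL
  have h1 : M / Real.sqrt B ≤ M / Real.sqrt L := by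
    have := Real.sqrt_le_sqrt hLB
    gcongr
  refine h1.trans ?_
  rw [div_le_iff₀ hsL]
  have h2 : Real.sqrt (c^2 * x * L) = c * Real.sqrt x * Real.sqrt L := by
    rw [Real.sqrt_mul (by positivity), Real.sqrt_mul (by positivity), Real.sqrt_sq hc]
  rw [← h2]
  calc M = Real.sqrt (M^2) := (Real.sqrt_sq hM).symm
    _ ≤ _ := Real.sqrt_le_sqrt key

lemma phi1_diff (n k : ℤ) (E : ℝ) (hK : 1 ≤ (k:ℝ)) (hN : 5*(k:ℝ) ≤ (n:ℝ))
    (hE0 : 0 ≤ E) (hE1 : E ≤ 1) :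
    |phi1 n ((1+E)*(k:ℝ)) - phi1 n (k:ℝ)| ≤ E * Real.sqrt ((k:ℝ)/(n:ℝ)) := by
  have hN0 : (0:ℝ) < (n:ℝ) := by linarith
  have hK0 : (0:ℝ) < (k:ℝ) := by linarith
  have hB : (0:ℝ) < (k:ℝ)/(n:ℝ) := by positivity
  have hA : (0:ℝ) ≤ (1+E)*(k:ℝ)/(n:ℝ) := by positivity
  unfold phi1
  refine le_trans (abs_sqrt_sub_sqrt_le hA hB) ?_
  have hdiff : |(1+E)*(k:ℝ)/(n:ℝ) - (k:ℝ)/(n:ℝ)| = E*(k:ℝ)/(n:ℝ) := by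
    have he : (1+E)*(k:ℝ)/(n:ℝ) - (k:ℝ)/(n:ℝ) = E*(k:ℝ)/(n:ℝ) := by ring
    rw [he, abs_of_nonneg (by positivity)]
  rw [hdiff]
  refine div_sqrt_le (by positivity) hB le_rfl hE0 hB.le ?_
  exact le_of_eq (by field_simp)






lemma two_div_sqrt_le {M1 M2 B L c x1 x2 : ℝ} (h1 : 0 ≤ M1) (h2 : 0 ≤ M2)
    (hL : 0 < L) (hLB : L ≤ B) (hc : 0 ≤ c) (hx1 : 0 ≤ x1) (hx2 : 0 ≤ x2)
    (k1 : M1^2 ≤ c^2 * x1 * L) (k2 : M2^2 ≤ c^2 * x2 * L) :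
    (M1 + M2) / Real.sqrt B ≤ c * Real.sqrt x1 + c * Real.sqrt x2 := by
  rw [add_div]
  exact add_le_add (div_sqrt_le h1 hL hLB hc hx1 k1) (div_sqrt_le h2 hL hLB hc hx2 k2)

lemma phi0_diff_real (N K T J E : ℝ)
    (hK : 1 ≤ K) (hN : 5*K ≤ N) (hT : 1 ≤ T) (hTK : 5*T ≤ K)
    (hJ1 : 1 ≤ J) (hJT : J < T) (hE0 : 0 ≤ E) (hE1 : E ≤ 1) :
    |Real.sqrt (J * ((1+E)*K - J + 1) * (N - (1+E)*K - J + 1) /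
        ((N - 2*J + 2) * (N - 2*J + 1) * ((1+E)*K)))
      - Real.sqrt (J * (K - J + 1) * (N - K - J + 1) /
        ((N - 2*J + 2) * (N - 2*J + 1) * K))| ≤
      3*E*Real.sqrt (T/K) + 3*E*Real.sqrt (K/N) := by
  have hK0 : (0:ℝ) < K := by linarith
  have hN0 : (0:ℝ) < N := by linarith
  have hT0 : (0:ℝ) < T := by linarith
  have hJ0 : (0:ℝ) < J := by linarith
  have h5J : 5*J ≤ K := by linarith
  have h25J : 25*J ≤ N := by linarith
  have hN5 : (5:ℝ) ≤ N := by linarith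
  have hκ1 : K ≤ (1+E)*K := by nlinarith
  have hκ2 : (1+E)*K ≤ 2*K := by nlinarith
  have hκ0 : (0:ℝ) < (1+E)*K := by linarith
  have hd10 : (0:ℝ) < N - 2*J + 2 := by linarith
  have hd20 : (0:ℝ) < N - 2*J + 1 := by linarith
  have hDlo : (9:ℝ)/25*N^2 ≤ (N - 2*J + 2) * (N - 2*J + 1) := by nlinarith
  have hX0 : 0 ≤ J * ((1+E)*K - J + 1) * (N - (1+E)*K - J + 1) /
      ((N - 2*J + 2) * (N - 2*J + 1) * ((1+E)*K)) := by
    apply div_nonneg (mul_nonneg (mul_nonneg hJ0.le (by linarith)) (by linarith))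
    positivity
  have hXpos : 0 < J * (K - J + 1) * (N - K - J + 1) /
      ((N - 2*J + 2) * (N - 2*J + 1) * K) := by
    apply div_pos (mul_pos (mul_pos hJ0 (by linarith)) (by linarith))
    positivity
  have hXlow : J/(5*N) ≤ J * (K - J + 1) * (N - K - J + 1) /
      ((N - 2*J + 2) * (N - 2*J + 1) * K) := by
    rw [div_le_div_iff₀ (by positivity) (by positivity)]
    have e1 : (N - 2*J + 2) * (N - 2*J + 1) ≤ 2*N^2 := by nlinarith
    have e1m := mul_le_mul_of_nonneg_left e1 (by positivity : (0:ℝ) ≤ J*K)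
    have g1 : (4/5*K)*(3/5*N) ≤ (K - J + 1)*(N - K - J + 1) :=
      mul_le_mul (by linarith) (by linarith) (by positivity) (by linarith)
    have e2 := mul_le_mul_of_nonneg_left g1 hJ0.le
    have e2m := mul_le_mul_of_nonneg_right e2 (by positivity : (0:ℝ) ≤ 5*N)
    nlinarith [e1m, e2m, mul_pos (mul_pos hJ0 hK0) (mul_pos hN0 hN0)]
  have hid : J * ((1+E)*K - J + 1) * (N - (1+E)*K - J + 1) /
        ((N - 2*J + 2) * (N - 2*J + 1) * ((1+E)*K))
      - J * (K - J + 1) * (N - K - J + 1) / ((N - 2*J + 2) * (N - 2*J + 1) * K)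
      = (J*E/((N - 2*J + 2) * (N - 2*J + 1))) * ((J-1)*(N-J+1)/((1+E)*K) - K) := by
    field_simp
    ring
  have hfac2 : |(J-1)*(N-J+1)/((1+E)*K) - K| ≤ 2*J*N/K + K := by
    have ha0 : 0 ≤ (J-1)*(N-J+1)/((1+E)*K) :=
      div_nonneg (mul_nonneg (by linarith) (by linarith)) hκ0.le
    have ha1 : (J-1)*(N-J+1)/((1+E)*K) ≤ 2*J*N/K := by
      apply div_le_div₀ (by positivity) ?_ hK0 hκ1
      nlinarith
    have hb0 : 0 ≤ 2*J*N/K := by positivity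
    exact abs_le.2 ⟨by linarith, by linarith⟩
  have hfac1 : J*E/((N - 2*J + 2) * (N - 2*J + 1)) ≤ J*E/((9:ℝ)/25*N^2) := by
    have hje : 0 ≤ J*E := mul_nonneg hJ0.le hE0
    gcongr
  have hdiffb : |J * ((1+E)*K - J + 1) * (N - (1+E)*K - J + 1) /
        ((N - 2*J + 2) * (N - 2*J + 1) * ((1+E)*K))
      - J * (K - J + 1) * (N - K - J + 1) / ((N - 2*J + 2) * (N - 2*J + 1) * K)|
      ≤ E*(6*J^2/(N*K)) + E*(3*J*K/N^2) := by
    rw [hid, abs_mul,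
      abs_of_nonneg (by positivity : (0:ℝ) ≤ J*E/((N - 2*J + 2) * (N - 2*J + 1)))]
    calc J*E/((N - 2*J + 2) * (N - 2*J + 1)) * |(J-1)*(N-J+1)/((1+E)*K) - K|
        ≤ J*E/((9:ℝ)/25*N^2) * (2*J*N/K + K) :=
          mul_le_mul hfac1 hfac2 (abs_nonneg _) (by positivity)
      _ = E*(50*J^2/(9*N*K)) + E*(25*J*K/(9*N^2)) := by field_simp; ring
      _ ≤ E*(6*J^2/(N*K)) + E*(3*J*K/N^2) := by
          have q1 : 50*J^2/(9*N*K) ≤ 6*J^2/(N*K) := by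
            rw [div_le_div_iff₀ (by positivity) (by positivity)]
            nlinarith [mul_nonneg (mul_nonneg (sq_nonneg J) hN0.le) hK0.le]
          have q2 : 25*J*K/(9*N^2) ≤ 3*J*K/N^2 := by
            rw [div_le_div_iff₀ (by positivity) (by positivity)]
            nlinarith [mul_nonneg (mul_nonneg hJ0.le hK0.le) (sq_nonneg N)]
          exact add_le_add (mul_le_mul_of_nonneg_left q1 hE0)
            (mul_le_mul_of_nonneg_left q2 hE0)
  set A1 := J * ((1+E)*K - J + 1) * (N - (1+E)*K - J + 1) /
      ((N - 2*J + 2) * (N - 2*J + 1) * ((1+E)*K)) with hA1def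
  set A2 := J * (K - J + 1) * (N - K - J + 1) /
      ((N - 2*J + 2) * (N - 2*J + 1) * K) with hA2def
  refine le_trans (abs_sqrt_sub_sqrt_le hX0 hXpos) ?_
  have step1 : |A1 - A2| / Real.sqrt A2
      ≤ (E*(6*J^2/(N*K)) + E*(3*J*K/N^2)) / Real.sqrt A2 := by gcongr
  refine step1.trans ?_
  apply two_div_sqrt_le (by positivity) (by positivity)
    (by positivity : (0:ℝ) < J/(5*N)) hXlow (by positivity : (0:ℝ) ≤ 3*E)
    (by positivity) (by positivity)
  · have lhs_eq : (E*(6*J^2/(N*K)))^2 = 36*E^2*J^4/(N^2*K^2) := by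
      field_simp; ring
    have rhs_eq : (3*E)^2*(T/K)*(J/(5*N)) = 9*E^2*T*J/(5*(K*N)) := by
      field_simp; ring
    rw [lhs_eq, rhs_eq, div_le_div_iff₀ (by positivity) (by positivity)]
    have hJ2 : 125*J^2 ≤ K*N := by
      nlinarith [mul_le_mul h5J h25J (by positivity : (0:ℝ) ≤ 25*J) hK0.le]
    have hJ3 : 125*J^3 ≤ T*(K*N) := by
      nlinarith [mul_le_mul hJT.le hJ2 (by positivity : (0:ℝ) ≤ 125*J^2) hT0.le]
    nlinarith [mul_le_mul_of_nonneg_left hJ3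
      (by positivity : (0:ℝ) ≤ E^2*(J*(K*N))),
      mul_nonneg (mul_nonneg (sq_nonneg E) (by positivity : (0:ℝ) ≤ J^3))
        (by positivity : (0:ℝ) ≤ J*(K*N))]
  · have lhs_eq : (E*(3*J*K/N^2))^2 = 9*E^2*J^2*K^2/N^4 := by
      field_simp; ring
    have rhs_eq : (3*E)^2*(K/N)*(J/(5*N)) = 9*E^2*K*J/(5*N^2) := by
      field_simp; ring
    rw [lhs_eq, rhs_eq, div_le_div_iff₀ (by positivity) (by positivity)]
    have hJK2 : 125*(J*K) ≤ N^2 := by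
      nlinarith [mul_le_mul h5J hN (by positivity : (0:ℝ) ≤ 5*K) hK0.le,
        mul_le_mul_of_nonneg_right hN hN0.le]
    nlinarith [mul_le_mul_of_nonneg_left hJK2
      (by positivity : (0:ℝ) ≤ E^2*(J*K)*N^2),
      mul_nonneg (mul_nonneg (sq_nonneg E) (by positivity : (0:ℝ) ≤ J*K))
        (by positivity : (0:ℝ) ≤ N^4)]






lemma phi3_diff_real (N K T J E : ℝ)
    (hK : 1 ≤ K) (hN : 5*K ≤ N) (hT : 1 ≤ T) (hTK : 5*T ≤ K)
    (hJ0 : 0 ≤ J) (hJT : J < T) (hE0 : 0 ≤ E) (hE1 : E ≤ 1) :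
    |Real.sqrt ((N - J + 1) * ((1+E)*K - J) * (N - (1+E)*K - J) /
        ((N - 2*J + 1) * (N - 2*J) * ((1+E)*K)))
      - Real.sqrt ((N - J + 1) * (K - J) * (N - K - J) /
        ((N - 2*J + 1) * (N - 2*J) * K))| ≤
      7*E*Real.sqrt (T/K) + 7*E*Real.sqrt (K/N) := by
  have hK0 : (0:ℝ) < K := by linarith
  have hN0 : (0:ℝ) < N := by linarith
  have hT0 : (0:ℝ) < T := by linarith
  have h5J : 5*J ≤ K := by linarith
  have h25J : 25*J ≤ N := by linarith
  have hN5 : (5:ℝ) ≤ N := by linarith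
  have hκ1 : K ≤ (1+E)*K := by nlinarith
  have hκ2 : (1+E)*K ≤ 2*K := by nlinarith
  have hκ0 : (0:ℝ) < (1+E)*K := by linarith
  have hd10 : (0:ℝ) < N - 2*J + 1 := by linarith
  have hd20 : (0:ℝ) < N - 2*J := by linarith
  have hDlo : (9:ℝ)/25*N^2 ≤ (N - 2*J + 1) * (N - 2*J) := by nlinarith
  have hX0 : 0 ≤ (N - J + 1) * ((1+E)*K - J) * (N - (1+E)*K - J) /
      ((N - 2*J + 1) * (N - 2*J) * ((1+E)*K)) := by
    apply div_nonneg (mul_nonneg (mul_nonneg (by linarith) (by linarith)) (by linarith))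
    positivity
  have hXpos : 0 < (N - J + 1) * (K - J) * (N - K - J) /
      ((N - 2*J + 1) * (N - 2*J) * K) := by
    apply div_pos (mul_pos (mul_pos (by linarith) (by linarith)) (by linarith))
    positivity
  have hXlow : (1:ℝ)/6 ≤ (N - J + 1) * (K - J) * (N - K - J) /
      ((N - 2*J + 1) * (N - 2*J) * K) := by
    rw [div_le_div_iff₀ (by norm_num) (by positivity)]
    have e1 : (N - 2*J + 1) * (N - 2*J) ≤ 2*N^2 := by nlinarith
    have e1m := mul_le_mul_of_nonneg_right e1 hK0.le
    have g1 : (4/5*N)*(4/5*K) ≤ (N - J + 1)*(K - J) :=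
      mul_le_mul (by linarith) (by linarith) (by positivity) (by linarith)
    have g2 : ((4/5*N)*(4/5*K))*(3/5*N) ≤ ((N - J + 1)*(K - J))*(N - K - J) :=
      mul_le_mul g1 (by linarith) (by positivity)
        (mul_nonneg (by linarith) (by linarith))
    nlinarith [e1m, g2, mul_pos (mul_pos hN0 hN0) hK0]
  have hid : (N - J + 1) * ((1+E)*K - J) * (N - (1+E)*K - J) /
        ((N - 2*J + 1) * (N - 2*J) * ((1+E)*K))
      - (N - J + 1) * (K - J) * (N - K - J) / ((N - 2*J + 1) * (N - 2*J) * K)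
      = ((N - J + 1)*E/((N - 2*J + 1) * (N - 2*J))) * (J*(N-J)/((1+E)*K) - K) := by
    field_simp
    ring
  have hfac2 : |J*(N-J)/((1+E)*K) - K| ≤ J*N/K + K := by
    have ha0 : 0 ≤ J*(N-J)/((1+E)*K) :=
      div_nonneg (mul_nonneg hJ0 (by linarith)) hκ0.le
    have ha1 : J*(N-J)/((1+E)*K) ≤ J*N/K := by
      apply div_le_div₀ (by positivity) ?_ hK0 hκ1
      nlinarith
    have hb0 : 0 ≤ J*N/K := by positivity
    exact abs_le.2 ⟨by linarith, by linarith⟩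
  have hfac1 : (N - J + 1)*E/((N - 2*J + 1) * (N - 2*J)) ≤ 2*N*E/((9:ℝ)/25*N^2) := by
    apply div_le_div₀ (by positivity) ?_ (by positivity) hDlo
    apply mul_le_mul_of_nonneg_right (by linarith) hE0
  have hdiffb : |(N - J + 1) * ((1+E)*K - J) * (N - (1+E)*K - J) /
        ((N - 2*J + 1) * (N - 2*J) * ((1+E)*K))
      - (N - J + 1) * (K - J) * (N - K - J) / ((N - 2*J + 1) * (N - 2*J) * K)|
      ≤ E*(6*T/K) + E*(6*K/N) := by
    rw [hid, abs_mul, abs_of_nonneg (div_nonneg (mul_nonneg (by linarith) hE0)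
      (mul_pos hd10 hd20).le)]
    calc (N - J + 1)*E/((N - 2*J + 1) * (N - 2*J)) * |J*(N-J)/((1+E)*K) - K|
        ≤ 2*N*E/((9:ℝ)/25*N^2) * (J*N/K + K) :=
          mul_le_mul hfac1 hfac2 (abs_nonneg _) (by positivity)
      _ = E*(50*J/(9*K)) + E*(50*K/(9*N)) := by field_simp; ring
      _ ≤ E*(6*T/K) + E*(6*K/N) := by
          have q1 : 50*J/(9*K) ≤ 6*T/K := by
            rw [div_le_div_iff₀ (by positivity) (by positivity)]
            nlinarith [mul_le_mul_of_nonneg_right hJT.le hK0.le]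
          have q2 : 50*K/(9*N) ≤ 6*K/N := by
            rw [div_le_div_iff₀ (by positivity) (by positivity)]
            nlinarith [mul_nonneg hK0.le hN0.le]
          exact add_le_add (mul_le_mul_of_nonneg_left q1 hE0)
            (mul_le_mul_of_nonneg_left q2 hE0)
  set A1 := (N - J + 1) * ((1+E)*K - J) * (N - (1+E)*K - J) /
      ((N - 2*J + 1) * (N - 2*J) * ((1+E)*K)) with hA1def
  set A2 := (N - J + 1) * (K - J) * (N - K - J) /
      ((N - 2*J + 1) * (N - 2*J) * K) with hA2def
  refine le_trans (abs_sqrt_sub_sqrt_le hX0 hXpos) ?_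
  have step1 : |A1 - A2| / Real.sqrt A2
      ≤ (E*(6*T/K) + E*(6*K/N)) / Real.sqrt A2 := by gcongr
  refine step1.trans ?_
  apply two_div_sqrt_le (by positivity) (by positivity)
    (by norm_num : (0:ℝ) < 1/6) hXlow (by positivity : (0:ℝ) ≤ 7*E)
    (by positivity) (by positivity)
  · have lhs_eq : (E*(6*T/K))^2 = 36*E^2*T^2/K^2 := by field_simp; ring
    have rhs_eq : (7*E)^2*(T/K)*((1:ℝ)/6) = 49*E^2*T/(6*K) := by field_simp; ring
    rw [lhs_eq, rhs_eq, div_le_div_iff₀ (by positivity) (by positivity)]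
    nlinarith [mul_le_mul_of_nonneg_left hTK
        (by positivity : (0:ℝ) ≤ E^2*(T*K)),
      mul_nonneg (mul_nonneg (sq_nonneg E) hT0.le) (sq_nonneg K)]
  · have lhs_eq : (E*(6*K/N))^2 = 36*E^2*K^2/N^2 := by field_simp; ring
    have rhs_eq : (7*E)^2*(K/N)*((1:ℝ)/6) = 49*E^2*K/(6*N) := by field_simp; ring
    rw [lhs_eq, rhs_eq, div_le_div_iff₀ (by positivity) (by positivity)]
    nlinarith [mul_le_mul_of_nonneg_left hN
        (by positivity : (0:ℝ) ≤ E^2*(K*N)),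
      mul_nonneg (mul_nonneg (sq_nonneg E) hK0.le) (sq_nonneg N)]

lemma phi2_diff_real (N K T J E : ℝ)
    (hK : 1 ≤ K) (hN : 5*K ≤ N) (hT : 1 ≤ T) (hTK : 5*T ≤ K)
    (hJ1 : 1 ≤ J) (hJT : J < T) (hE0 : 0 ≤ E) (hE1 : E ≤ 1) :
    |Real.sqrt ((N - 2*((1+E)*K))^2 * (J*(N - J + 1)) /
        ((N*((1+E)*K)) * ((N - 2*J + 2) * (N - 2*J))))
      - Real.sqrt ((N - 2*K)^2 * (J*(N - J + 1)) /
        ((N*K) * ((N - 2*J + 2) * (N - 2*J))))| ≤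
      17*E*Real.sqrt (T/K) := by
  have hK0 : (0:ℝ) < K := by linarith
  have hN0 : (0:ℝ) < N := by linarith
  have hT0 : (0:ℝ) < T := by linarith
  have hJ0 : (0:ℝ) < J := by linarith
  have h5J : 5*J ≤ K := by linarith
  have h25J : 25*J ≤ N := by linarith
  have hN5 : (5:ℝ) ≤ N := by linarith
  have hκ1 : K ≤ (1+E)*K := by nlinarith
  have hκ2 : (1+E)*K ≤ 2*K := by nlinarith
  have hκ0 : (0:ℝ) < (1+E)*K := by linarith
  have hd10 : (0:ℝ) < N - 2*J + 2 := by linarith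
  have hd20 : (0:ℝ) < N - 2*J := by linarith
  have hDlo : (9:ℝ)/25*N^2 ≤ (N - 2*J + 2) * (N - 2*J) := by nlinarith
  have hX0 : 0 ≤ (N - 2*((1+E)*K))^2 * (J*(N - J + 1)) /
      ((N*((1+E)*K)) * ((N - 2*J + 2) * (N - 2*J))) := by
    apply div_nonneg (mul_nonneg (sq_nonneg _) (mul_nonneg hJ0.le (by linarith)))
    positivity
  have hNK2 : (0:ℝ) < N - 2*K := by linarith
  have hXpos : 0 < (N - 2*K)^2 * (J*(N - J + 1)) /
      ((N*K) * ((N - 2*J + 2) * (N - 2*J))) := by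
    apply div_pos (mul_pos (by positivity) (mul_pos hJ0 (by linarith)))
    positivity
  have hXlow : J/(8*K) ≤ (N - 2*K)^2 * (J*(N - J + 1)) /
      ((N*K) * ((N - 2*J + 2) * (N - 2*J))) := by
    rw [div_le_div_iff₀ (by positivity) (by positivity)]
    have e1 : (N - 2*J + 2) * (N - 2*J) ≤ 2*N^2 := by nlinarith
    have e1m := mul_le_mul_of_nonneg_left e1 (by positivity : (0:ℝ) ≤ J*(N*K))
    have f1 : (3/5*N)^2 ≤ (N - 2*K)^2 := by nlinarith
    have g1 : J*(4/5*N) ≤ J*(N - J + 1) :=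
      mul_le_mul_of_nonneg_left (by linarith) hJ0.le
    have a1 : (3/5*N)^2*(J*(4/5*N)) ≤ (N - 2*K)^2*(J*(N - J + 1)) :=
      mul_le_mul f1 g1 (by positivity) (by positivity)
    have a1m := mul_le_mul_of_nonneg_left a1 (by positivity : (0:ℝ) ≤ 8*K)
    nlinarith [e1m, a1m, mul_pos (mul_pos hJ0 hK0) (mul_pos (mul_pos hN0 hN0) hN0)]
  have hid : (N - 2*((1+E)*K))^2 * (J*(N - J + 1)) /
        ((N*((1+E)*K)) * ((N - 2*J + 2) * (N - 2*J)))
      - (N - 2*K)^2 * (J*(N - J + 1)) / ((N*K) * ((N - 2*J + 2) * (N - 2*J)))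
      = ((J*(N - J + 1))*E/(N*((N - 2*J + 2) * (N - 2*J))))
        * (4*K - N^2/((1+E)*K)) := by
    field_simp
    ring
  have hfac2 : |4*K - N^2/((1+E)*K)| ≤ N^2/K := by
    have b1 : N^2/((1+E)*K) ≤ N^2/K := by
      have h0 : (0:ℝ) ≤ N^2 := sq_nonneg N
      gcongr
    have b2 : 4*K ≤ N^2/((1+E)*K) := by
      rw [le_div_iff₀ hκ0]
      nlinarith [mul_le_mul hN hN (by positivity) (by positivity)]
    have b3 : (0:ℝ) ≤ N^2/((1+E)*K) := by positivity
    rw [abs_of_nonpos (by linarith)]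
    linarith
  have hfac1 : (J*(N - J + 1))*E/(N*((N - 2*J + 2) * (N - 2*J)))
      ≤ (J*(2*N))*E/(N*((9:ℝ)/25*N^2)) := by
    apply div_le_div₀ (by positivity) ?_ (by positivity) ?_
    · apply mul_le_mul_of_nonneg_right ?_ hE0
      apply mul_le_mul_of_nonneg_left (by linarith) hJ0.le
    · exact mul_le_mul_of_nonneg_left hDlo hN0.le
  have hdiffb : |(N - 2*((1+E)*K))^2 * (J*(N - J + 1)) /
        ((N*((1+E)*K)) * ((N - 2*J + 2) * (N - 2*J)))
      - (N - 2*K)^2 * (J*(N - J + 1)) / ((N*K) * ((N - 2*J + 2) * (N - 2*J)))|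
      ≤ E*(6*J/K) := by
    rw [hid, abs_mul, abs_of_nonneg (div_nonneg
      (mul_nonneg (mul_nonneg hJ0.le (by linarith)) hE0)
      (mul_pos hN0 (mul_pos hd10 hd20)).le)]
    calc (J*(N - J + 1))*E/(N*((N - 2*J + 2) * (N - 2*J))) * |4*K - N^2/((1+E)*K)|
        ≤ (J*(2*N))*E/(N*((9:ℝ)/25*N^2)) * (N^2/K) :=
          mul_le_mul hfac1 hfac2 (abs_nonneg _) (by positivity)
      _ = E*(50*J/(9*K)) := by field_simp; ring
      _ ≤ E*(6*J/K) := by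
          apply mul_le_mul_of_nonneg_left ?_ hE0
          rw [div_le_div_iff₀ (by positivity) (by positivity)]
          nlinarith [mul_nonneg hJ0.le hK0.le]
  set A1 := (N - 2*((1+E)*K))^2 * (J*(N - J + 1)) /
      ((N*((1+E)*K)) * ((N - 2*J + 2) * (N - 2*J))) with hA1def
  set A2 := (N - 2*K)^2 * (J*(N - J + 1)) /
      ((N*K) * ((N - 2*J + 2) * (N - 2*J))) with hA2def
  refine le_trans (abs_sqrt_sub_sqrt_le hX0 hXpos) ?_
  have step1 : |A1 - A2| / Real.sqrt A2 ≤ (E*(6*J/K)) / Real.sqrt A2 := by gcongr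
  refine step1.trans ?_
  apply div_sqrt_le (by positivity) (by positivity : (0:ℝ) < J/(8*K)) hXlow
    (by positivity : (0:ℝ) ≤ 17*E) (by positivity)
  have lhs_eq : (E*(6*J/K))^2 = 36*E^2*J^2/K^2 := by field_simp; ring
  have rhs_eq : (17*E)^2*(T/K)*(J/(8*K)) = 289*E^2*T*J/(8*K^2) := by field_simp; ring
  rw [lhs_eq, rhs_eq, div_le_div_iff₀ (by positivity) (by positivity)]
  nlinarith [mul_le_mul_of_nonneg_left hJT.le
      (by positivity : (0:ℝ) ≤ E^2*(J*K^2)),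
    mul_nonneg (mul_nonneg (sq_nonneg E) (mul_nonneg hJ0.le hT0.le)) (sq_nonneg K)]




lemma phi2_eq (n j : ℤ) (κ : ℝ) (h1 : 0 ≤ (n:ℝ) - 2*κ) (h2 : 0 < (n:ℝ)) (h3 : 0 < κ) :
    phi2 n j κ = Real.sqrt (((n:ℝ) - 2*κ)^2 * ((j:ℝ)*((n:ℝ) - (j:ℝ) + 1)) /
      (((n:ℝ)*κ) * (((n:ℝ) - 2*(j:ℝ) + 2) * ((n:ℝ) - 2*(j:ℝ))))) := by
  unfold phi2
  conv_lhs => rw [show ((n:ℝ) - 2*κ) = Real.sqrt (((n:ℝ) - 2*κ)^2) from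
    (Real.sqrt_sq h1).symm]
  rw [← Real.sqrt_div (sq_nonneg _), ← Real.sqrt_mul (by positivity), div_mul_div_comm]

lemma sqrt_le_four {x : ℝ} (h : x ≤ 16) : Real.sqrt x ≤ 4 := by
  calc Real.sqrt x ≤ Real.sqrt 16 := Real.sqrt_le_sqrt h
    _ = 4 := by
        rw [show (16:ℝ) = 4^2 by norm_num, Real.sqrt_sq (by norm_num)]

lemma phi0_bd_real (N K J κ : ℝ) (hK : 1 ≤ K) (hN : 5*K ≤ N) (hJ0 : 0 ≤ J)
    (hJK : J ≤ K) (hκ1 : K ≤ κ) (hκ2 : κ ≤ 2*K) :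
    Real.sqrt (J*(κ - J + 1)*(N - κ - J + 1)/((N - 2*J + 2)*(N - 2*J + 1)*κ)) ≤ 4 := by
  have hK0 : (0:ℝ) < K := by linarith
  have hN0 : (0:ℝ) < N := by linarith
  have hκ0 : (0:ℝ) < κ := by linarith
  have hd10 : (0:ℝ) < N - 2*J + 2 := by linarith
  have hd20 : (0:ℝ) < N - 2*J + 1 := by linarith
  have hDlo : (9:ℝ)/25*N^2 ≤ (N - 2*J + 2)*(N - 2*J + 1) := by nlinarith
  apply sqrt_le_four
  rw [div_le_iff₀ (by positivity)]
  have m1 : J*(κ - J + 1) ≤ K*(3*K) :=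
    mul_le_mul hJK (by linarith) (by linarith) hK0.le
  have b1 : J*(κ - J + 1)*(N - κ - J + 1) ≤ K*(3*K)*(2*N) :=
    mul_le_mul m1 (by linarith) (by linarith) (by positivity)
  have c1 := mul_le_mul_of_nonneg_left hDlo (by positivity : (0:ℝ) ≤ 16*κ)
  have c2 : 16*K*((9:ℝ)/25*N^2) ≤ 16*κ*((9:ℝ)/25*N^2) := by nlinarith
  nlinarith [b1, c1, c2, mul_le_mul_of_nonneg_right hN (mul_nonneg hK0.le hN0.le)]

lemma phi3_bd_real (N K J κ : ℝ) (hK : 1 ≤ K) (hN : 5*K ≤ N) (hJ0 : 0 ≤ J)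
    (hJK : J ≤ K) (hκ1 : K ≤ κ) (hκ2 : κ ≤ 2*K) :
    Real.sqrt ((N - J + 1)*(κ - J)*(N - κ - J)/((N - 2*J + 1)*(N - 2*J)*κ)) ≤ 4 := by
  have hK0 : (0:ℝ) < K := by linarith
  have hN0 : (0:ℝ) < N := by linarith
  have hκ0 : (0:ℝ) < κ := by linarith
  have hd10 : (0:ℝ) < N - 2*J + 1 := by linarith
  have hd20 : (0:ℝ) < N - 2*J := by linarith
  have hDlo : (9:ℝ)/25*N^2 ≤ (N - 2*J + 1)*(N - 2*J) := by nlinarith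
  apply sqrt_le_four
  rw [div_le_iff₀ (by positivity)]
  have m1 : (N - J + 1)*(κ - J) ≤ (2*N)*(2*K) :=
    mul_le_mul (by linarith) (by linarith) (by linarith) (by positivity)
  have b1 : (N - J + 1)*(κ - J)*(N - κ - J) ≤ (2*N)*(2*K)*N :=
    mul_le_mul m1 (by linarith) (by linarith) (by positivity)
  have c1 := mul_le_mul_of_nonneg_left hDlo (by positivity : (0:ℝ) ≤ 16*κ)
  have c2 : 16*K*((9:ℝ)/25*N^2) ≤ 16*κ*((9:ℝ)/25*N^2) := by nlinarith
  nlinarith [b1, c1, c2]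

lemma phi1_bd_real (N K κ : ℝ) (hK : 1 ≤ K) (hN : 5*K ≤ N) (hκ1 : K ≤ κ)
    (hκ2 : κ ≤ 2*K) : Real.sqrt (κ/N) ≤ 4 := by
  have hN0 : (0:ℝ) < N := by linarith
  apply sqrt_le_four
  rw [div_le_iff₀ hN0]
  nlinarith

lemma phi2_bd_real (N K J κ : ℝ) (hK : 1 ≤ K) (hN : 5*K ≤ N) (hJ0 : 0 ≤ J)
    (hJK : J ≤ K) (hκ1 : K ≤ κ) (hκ2 : κ ≤ 2*K) :
    Real.sqrt ((N - 2*κ)^2 * (J*(N - J + 1)) /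
      ((N*κ) * ((N - 2*J + 2)*(N - 2*J)))) ≤ 4 := by
  have hK0 : (0:ℝ) < K := by linarith
  have hN0 : (0:ℝ) < N := by linarith
  have hκ0 : (0:ℝ) < κ := by linarith
  have hd10 : (0:ℝ) < N - 2*J + 2 := by linarith
  have hd20 : (0:ℝ) < N - 2*J := by linarith
  have hNκ : (0:ℝ) ≤ N - 2*κ := by linarith
  have hDlo : (9:ℝ)/25*N^2 ≤ (N - 2*J + 2)*(N - 2*J) := by nlinarith
  apply sqrt_le_four
  rw [div_le_iff₀ (by positivity)]
  have f1 : (N - 2*κ)^2 ≤ N^2 := by nlinarith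
  have m1 : J*(N - J + 1) ≤ K*(2*N) :=
    mul_le_mul hJK (by linarith) (by linarith) hK0.le
  have b1 : (N - 2*κ)^2 * (J*(N - J + 1)) ≤ N^2*(K*(2*N)) :=
    mul_le_mul f1 m1 (mul_nonneg hJ0 (by linarith)) (by positivity)
  have c1 := mul_le_mul_of_nonneg_left hDlo (by positivity : (0:ℝ) ≤ 16*(N*κ))
  have c2 : 16*(N*K)*((9:ℝ)/25*N^2) ≤ 16*(N*κ)*((9:ℝ)/25*N^2) := by
    nlinarith [mul_le_mul_of_nonneg_left hκ1 hN0.le, sq_nonneg N, mul_pos hN0 hN0]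
  nlinarith [b1, c1, c2, mul_pos hK0 (mul_pos hN0 (mul_pos hN0 hN0))]

-- ============ helper: splits, vec norm, main assembly test ============
lemma split1 (u v p q : ℝ) (hv : 0 ≤ v) (hp : 0 ≤ p) :
    |u*p - v*q| ≤ v*|p - q| + |u - v| * p := by
  have h : u*p - v*q = v*(p - q) + (u - v)*p := by ring
  rw [h]
  refine le_trans (abs_add_le _ _) ?_
  rw [abs_mul, abs_mul, abs_of_nonneg hv, abs_of_nonneg hp]

lemma split2 (u v p q : ℝ) (hv : 0 ≤ v) (hq : 0 ≤ q) :
    |u*q - v*p| ≤ v*|p - q| + |u - v| * q := by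
  have h : u*q - v*p = v*(q - p) + (u - v)*q := by ring
  rw [h]
  refine le_trans (abs_add_le _ _) ?_
  rw [abs_mul, abs_mul, abs_of_nonneg hv, abs_of_nonneg hq, abs_sub_comm p q]

lemma mulsub (v x y : ℝ) (hv : 0 ≤ v) : |v*x - v*y| = v*|x - y| := by
  rw [← mul_sub, abs_mul, abs_of_nonneg hv]

lemma vec_norm_le (a0 a1 a2 a3 b0 b1 b2 b3 s : ℝ) :
    ‖((WithLp.equiv 2 (Fin 4 → ℝ)).symm ![a0,a1,a2,a3]
      - s • (WithLp.equiv 2 (Fin 4 → ℝ)).symm ![b0,b1,b2,b3] : EuclideanSpace ℝ (Fin 4))‖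
      ≤ |a0 - s*b0| + |a1 - s*b1| + |a2 - s*b2| + |a3 - s*b3| := by
  refine le_trans (norm_le_sum _) (le_of_eq ?_)
  simp

/-- `‖φ̃'_j − γ_j·φ_j‖ ≤ C·(ε·sqrt(k/n) + ε·sqrt(t/k) + 1/t)` and
`‖γ_j·φ'_j − φ̃_j‖ ≤ C·(ε·sqrt(k/n) + ε·sqrt(t/k) + 1/t)`, where `k' = (1+ε)k`. -/
theorem phiTilde_difference_bound :
    ∃ C : ℝ, 0 < C ∧ ∀ (n k t j : ℤ) (ε : ℝ),
      1 ≤ k → 5 * k ≤ n → 1 ≤ t → 5 * t ≤ k → 0 ≤ j → j ≤ k →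
      1 / (k : ℝ) ≤ ε → ε ≤ 1 →
      ‖phiTildeVec n k t j ((1 + ε) * (k : ℝ)) - gammaCoeff k t j • phiVec n j (k : ℝ)‖ ≤
          C * (ε * Real.sqrt ((k : ℝ) / (n : ℝ)) + ε * Real.sqrt ((t : ℝ) / (k : ℝ))
            + 1 / (t : ℝ)) ∧
      ‖gammaCoeff k t j • phiVec n j ((1 + ε) * (k : ℝ)) - phiTildeVec n k t j (k : ℝ)‖ ≤
          C * (ε * Real.sqrt ((k : ℝ) / (n : ℝ)) + ε * Real.sqrt ((t : ℝ) / (k : ℝ))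
            + 1 / (t : ℝ)) := by
  refine ⟨50, by norm_num, fun n k t j ε hk hn ht htk hj0 hjk hε1 hε2 => ?_⟩
  have hK : 1 ≤ (k:ℝ) := by exact_mod_cast hk
  have hN : 5*(k:ℝ) ≤ (n:ℝ) := by exact_mod_cast hn
  have hT : 1 ≤ (t:ℝ) := by exact_mod_cast ht
  have hTK : 5*(t:ℝ) ≤ (k:ℝ) := by exact_mod_cast htk
  have hJ0 : (0:ℝ) ≤ (j:ℝ) := by exact_mod_cast hj0
  have hJK : (j:ℝ) ≤ (k:ℝ) := by exact_mod_cast hjk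
  have hK0 : (0:ℝ) < (k:ℝ) := by linarith
  have hT0 : (0:ℝ) < (t:ℝ) := by linarith
  have hN0 : (0:ℝ) < (n:ℝ) := by linarith
  have hE0 : (0:ℝ) ≤ ε := le_trans (by positivity) hε1
  have hE1 : ε ≤ 1 := hε2
  have hκ1 : (k:ℝ) ≤ (1+ε)*(k:ℝ) := by nlinarith
  have hκ2 : (1+ε)*(k:ℝ) ≤ 2*(k:ℝ) := by nlinarith
  have hκ0 : (0:ℝ) < (1+ε)*(k:ℝ) := by linarith
  have hNκ' : (0:ℝ) ≤ (n:ℝ) - 2*((1+ε)*(k:ℝ)) := by linarith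
  have hNκ : (0:ℝ) ≤ (n:ℝ) - 2*(k:ℝ) := by linarith
  have hg0 : 0 ≤ gammaCoeff k t j := gamma_nonneg k t j
  have hg1 : gammaCoeff k t j ≤ 1 := gamma_le_one k t j ht
  -- nonnegativity of phi values
  have hp0κ : 0 ≤ phi0 n j ((1+ε)*(k:ℝ)) := by unfold phi0; exact Real.sqrt_nonneg _
  have hp0k : 0 ≤ phi0 n j (k:ℝ) := by unfold phi0; exact Real.sqrt_nonneg _
  have hp3κ : 0 ≤ phi3 n j ((1+ε)*(k:ℝ)) := by unfold phi3; exact Real.sqrt_nonneg _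
  have hp3k : 0 ≤ phi3 n j (k:ℝ) := by unfold phi3; exact Real.sqrt_nonneg _
  -- value bounds
  have hb0κ : phi0 n j ((1+ε)*(k:ℝ)) ≤ 4 := by
    unfold phi0; exact phi0_bd_real _ _ _ _ hK hN hJ0 hJK hκ1 hκ2
  have hb0k : phi0 n j (k:ℝ) ≤ 4 := by
    unfold phi0; exact phi0_bd_real _ _ _ _ hK hN hJ0 hJK le_rfl (by linarith)
  have hb3κ : phi3 n j ((1+ε)*(k:ℝ)) ≤ 4 := by
    unfold phi3; exact phi3_bd_real _ _ _ _ hK hN hJ0 hJK hκ1 hκ2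
  have hb3k : phi3 n j (k:ℝ) ≤ 4 := by
    unfold phi3; exact phi3_bd_real _ _ _ _ hK hN hJ0 hJK le_rfl (by linarith)
  -- difference bounds multiplied by gamma
  have hD1 : gammaCoeff k t j * |phi1 n ((1+ε)*(k:ℝ)) - phi1 n (k:ℝ)|
      ≤ ε*Real.sqrt ((k:ℝ)/(n:ℝ)) := by
    have h := phi1_diff n k ε hK hN hE0 hE1
    calc gammaCoeff k t j * |phi1 n ((1+ε)*(k:ℝ)) - phi1 n (k:ℝ)|
        ≤ 1 * |phi1 n ((1+ε)*(k:ℝ)) - phi1 n (k:ℝ)| :=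
          mul_le_mul_of_nonneg_right hg1 (abs_nonneg _)
      _ = |phi1 n ((1+ε)*(k:ℝ)) - phi1 n (k:ℝ)| := one_mul _
      _ ≤ _ := h
  have hD0 : gammaCoeff k t j * |phi0 n j ((1+ε)*(k:ℝ)) - phi0 n j (k:ℝ)|
      ≤ 3*ε*Real.sqrt ((t:ℝ)/(k:ℝ)) + 3*ε*Real.sqrt ((k:ℝ)/(n:ℝ)) := by
    rcases eq_or_lt_of_le hg0 with h|h
    · rw [← h, zero_mul]; positivity
    · have hJT : (j:ℝ) < (t:ℝ) := gamma_pos_lt k t j ht h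
      by_cases hj1 : 1 ≤ j
      · have hj1' : (1:ℝ) ≤ (j:ℝ) := by exact_mod_cast hj1
        have hd : |phi0 n j ((1+ε)*(k:ℝ)) - phi0 n j (k:ℝ)|
            ≤ 3*ε*Real.sqrt ((t:ℝ)/(k:ℝ)) + 3*ε*Real.sqrt ((k:ℝ)/(n:ℝ)) := by
          unfold phi0
          exact phi0_diff_real _ _ _ _ ε hK hN hT hTK hj1' hJT hE0 hE1
        calc gammaCoeff k t j * |phi0 n j ((1+ε)*(k:ℝ)) - phi0 n j (k:ℝ)|
            ≤ 1 * |phi0 n j ((1+ε)*(k:ℝ)) - phi0 n j (k:ℝ)| :=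
              mul_le_mul_of_nonneg_right hg1 (abs_nonneg _)
          _ = _ := one_mul _
          _ ≤ _ := hd
      · have hj00 : j = 0 := by omega
        subst hj00
        simp only [phi0, Int.cast_zero, zero_mul, zero_div, Real.sqrt_zero, sub_zero,
          abs_zero, mul_zero]
        positivity
  have hD3 : gammaCoeff k t j * |phi3 n j ((1+ε)*(k:ℝ)) - phi3 n j (k:ℝ)|
      ≤ 7*ε*Real.sqrt ((t:ℝ)/(k:ℝ)) + 7*ε*Real.sqrt ((k:ℝ)/(n:ℝ)) := by
    rcases eq_or_lt_of_le hg0 with h|h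
    · rw [← h, zero_mul]; positivity
    · have hJT : (j:ℝ) < (t:ℝ) := gamma_pos_lt k t j ht h
      have hd : |phi3 n j ((1+ε)*(k:ℝ)) - phi3 n j (k:ℝ)|
          ≤ 7*ε*Real.sqrt ((t:ℝ)/(k:ℝ)) + 7*ε*Real.sqrt ((k:ℝ)/(n:ℝ)) := by
        unfold phi3
        exact phi3_diff_real _ _ _ _ ε hK hN hT hTK hJ0 hJT hE0 hE1
      calc gammaCoeff k t j * |phi3 n j ((1+ε)*(k:ℝ)) - phi3 n j (k:ℝ)|
          ≤ 1 * |phi3 n j ((1+ε)*(k:ℝ)) - phi3 n j (k:ℝ)| :=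
            mul_le_mul_of_nonneg_right hg1 (abs_nonneg _)
        _ = _ := one_mul _
        _ ≤ _ := hd
  have hD2 : gammaCoeff k t j * |phi2 n j ((1+ε)*(k:ℝ)) - phi2 n j (k:ℝ)|
      ≤ 17*ε*Real.sqrt ((t:ℝ)/(k:ℝ)) := by
    rcases eq_or_lt_of_le hg0 with h|h
    · rw [← h, zero_mul]; positivity
    · have hJT : (j:ℝ) < (t:ℝ) := gamma_pos_lt k t j ht h
      by_cases hj1 : 1 ≤ j
      · have hj1' : (1:ℝ) ≤ (j:ℝ) := by exact_mod_cast hj1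
        have hd : |phi2 n j ((1+ε)*(k:ℝ)) - phi2 n j (k:ℝ)|
            ≤ 17*ε*Real.sqrt ((t:ℝ)/(k:ℝ)) := by
          rw [phi2_eq n j _ hNκ' hN0 hκ0, phi2_eq n j _ hNκ hN0 hK0]
          exact phi2_diff_real _ _ _ _ ε hK hN hT hTK hj1' hJT hE0 hE1
        calc gammaCoeff k t j * |phi2 n j ((1+ε)*(k:ℝ)) - phi2 n j (k:ℝ)|
            ≤ 1 * |phi2 n j ((1+ε)*(k:ℝ)) - phi2 n j (k:ℝ)| :=
              mul_le_mul_of_nonneg_right hg1 (abs_nonneg _)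
          _ = _ := one_mul _
          _ ≤ _ := hd
      · have hj00 : j = 0 := by omega
        subst hj00
        simp only [phi2, Int.cast_zero, zero_mul, zero_div, Real.sqrt_zero, mul_zero,
          sub_zero, abs_zero]
        positivity
  -- gamma mismatch terms
  have hG0κ : |gammaCoeff k t (j-1) - gammaCoeff k t j| * phi0 n j ((1+ε)*(k:ℝ))
      ≤ 4*(1/(t:ℝ)) := by
    by_cases hj1 : 1 ≤ j
    · calc |gammaCoeff k t (j-1) - gammaCoeff k t j| * phi0 n j ((1+ε)*(k:ℝ))
          ≤ (1/(t:ℝ)) * 4 :=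
            mul_le_mul (gamma_adj_left k t j ht hj1 hjk) hb0κ hp0κ (by positivity)
        _ = 4*(1/(t:ℝ)) := by ring
    · have hj00 : j = 0 := by omega
      subst hj00
      simp only [phi0, Int.cast_zero, zero_mul, zero_div, Real.sqrt_zero, mul_zero]
      positivity
  have hG0k : |gammaCoeff k t (j-1) - gammaCoeff k t j| * phi0 n j (k:ℝ)
      ≤ 4*(1/(t:ℝ)) := by
    by_cases hj1 : 1 ≤ j
    · calc |gammaCoeff k t (j-1) - gammaCoeff k t j| * phi0 n j (k:ℝ)
          ≤ (1/(t:ℝ)) * 4 :=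
            mul_le_mul (gamma_adj_left k t j ht hj1 hjk) hb0k hp0k (by positivity)
        _ = 4*(1/(t:ℝ)) := by ring
    · have hj00 : j = 0 := by omega
      subst hj00
      simp only [phi0, Int.cast_zero, zero_mul, zero_div, Real.sqrt_zero, mul_zero]
      positivity
  have hG3κ : |gammaCoeff k t (j+1) - gammaCoeff k t j| * phi3 n j ((1+ε)*(k:ℝ))
      ≤ 4*(1/(t:ℝ)) := by
    by_cases hjk2 : j = k
    · rw [hjk2, (gamma_top k t ht htk).2, (gamma_top k t ht htk).1, sub_zero,
        abs_zero, zero_mul]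
      positivity
    · calc |gammaCoeff k t (j+1) - gammaCoeff k t j| * phi3 n j ((1+ε)*(k:ℝ))
          ≤ (1/(t:ℝ)) * 4 :=
            mul_le_mul (gamma_adj_right k t j ht hj0 (by omega)) hb3κ hp3κ (by positivity)
        _ = 4*(1/(t:ℝ)) := by ring
  have hG3k : |gammaCoeff k t (j+1) - gammaCoeff k t j| * phi3 n j (k:ℝ)
      ≤ 4*(1/(t:ℝ)) := by
    by_cases hjk2 : j = k
    · rw [hjk2, (gamma_top k t ht htk).2, (gamma_top k t ht htk).1, sub_zero,
        abs_zero, zero_mul]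
      positivity
    · calc |gammaCoeff k t (j+1) - gammaCoeff k t j| * phi3 n j (k:ℝ)
          ≤ (1/(t:ℝ)) * 4 :=
            mul_le_mul (gamma_adj_right k t j ht hj0 (by omega)) hb3k hp3k (by positivity)
        _ = 4*(1/(t:ℝ)) := by ring
  -- nonnegativity of target pieces
  have hq1 : (0:ℝ) ≤ ε*Real.sqrt ((k:ℝ)/(n:ℝ)) := by positivity
  have hq2 : (0:ℝ) ≤ ε*Real.sqrt ((t:ℝ)/(k:ℝ)) := by positivity
  have hq3 : (0:ℝ) ≤ 1/(t:ℝ) := by positivity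
  constructor
  · have hc0 := (split1 (gammaCoeff k t (j-1)) (gammaCoeff k t j)
      (phi0 n j ((1+ε)*(k:ℝ))) (phi0 n j (k:ℝ)) hg0 hp0κ)
    have hc3 := (split1 (gammaCoeff k t (j+1)) (gammaCoeff k t j)
      (phi3 n j ((1+ε)*(k:ℝ))) (phi3 n j (k:ℝ)) hg0 hp3κ)
    have hc1 := mulsub (gammaCoeff k t j) (phi1 n ((1+ε)*(k:ℝ))) (phi1 n (k:ℝ)) hg0
    have hc2 := mulsub (gammaCoeff k t j) (phi2 n j ((1+ε)*(k:ℝ))) (phi2 n j (k:ℝ)) hg0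
    refine le_trans (by unfold phiTildeVec phiVec; exact vec_norm_le _ _ _ _ _ _ _ _ _) ?_
    linarith [hc0, hc1, hc2, hc3, hD0, hD1, hD2, hD3, hG0κ, hG3κ]
  · rw [norm_sub_rev]
    have hc0 := (split2 (gammaCoeff k t (j-1)) (gammaCoeff k t j)
      (phi0 n j ((1+ε)*(k:ℝ))) (phi0 n j (k:ℝ)) hg0 hp0k)
    have hc3 := (split2 (gammaCoeff k t (j+1)) (gammaCoeff k t j)
      (phi3 n j ((1+ε)*(k:ℝ))) (phi3 n j (k:ℝ)) hg0 hp3k)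
    have hc1 : |gammaCoeff k t j * phi1 n (k:ℝ) - gammaCoeff k t j * phi1 n ((1+ε)*(k:ℝ))|
        = gammaCoeff k t j * |phi1 n ((1+ε)*(k:ℝ)) - phi1 n (k:ℝ)| := by
      rw [mulsub _ _ _ hg0, abs_sub_comm]
    have hc2 : |gammaCoeff k t j * phi2 n j (k:ℝ)
          - gammaCoeff k t j * phi2 n j ((1+ε)*(k:ℝ))|
        = gammaCoeff k t j * |phi2 n j ((1+ε)*(k:ℝ)) - phi2 n j (k:ℝ)| := by
      rw [mulsub _ _ _ hg0, abs_sub_comm]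
    refine le_trans (by unfold phiTildeVec phiVec; exact vec_norm_le _ _ _ _ _ _ _ _ _) ?_
    linarith [hc0, hc1, hc2, hc3, hD0, hD1, hD2, hD3, hG0k, hG3k]
end

section
/- There exists a universal constant C > 0 such that for all integers n, k, t, j with k ≥ 1, n ≥ 5k, t ≥ 1, 5t ≤ k, 0 ≤ j ≤ k, and every real ε with 1/k ≤ ε ≤ 1 and k' = (1+ε)k, the following holds. Set γ_i = max(1 − i/t, 0) for 0 ≤ i ≤ k and γ_{k+1} = 0. Then both | sqrt((k−j)(n−k'−j))·γ_j/(n−2j) − sqrt((k'−j)(n−k−j))·γ_{j+1}/(n−2j) | ≤ C·(1/t + ε)·sqrt(k/n) and | sqrt((k'−j)(n−k−j))·γ_j/(n−2j) − sqrt((k−j)(n−k'−j))·γ_{j+1}/(n−2j) | ≤ C·(1/t + ε)·sqrt(k/n). -/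
private lemma key_abs (D a b γ γ' τ e s : ℝ) (hD : 0 < D) (hγ0 : 0 ≤ γ) (_hγ1 : γ ≤ 1)
    (hτ : 0 ≤ τ) (he : 0 ≤ e) (hs : 0 ≤ s)
    (hb0 : 0 ≤ b) (hdiff : |γ - γ'| ≤ τ)
    (hbD : b ≤ 3 * (D * s))
    (hab : |a - b| * γ ≤ 2 * e * (D * s)) :
    |a * γ / D - b * γ' / D| ≤ 3 * (τ + e) * s := by
  have h1 : a * γ / D - b * γ' / D = ((a - b) * γ + b * (γ - γ')) / D := by ring
  rw [h1, abs_div, abs_of_pos hD, div_le_iff₀ hD]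
  have h2 : |(a - b) * γ + b * (γ - γ')| ≤ |a - b| * γ + b * |γ - γ'| := by
    calc |(a - b) * γ + b * (γ - γ')| ≤ |(a - b) * γ| + |b * (γ - γ')| := abs_add_le _ _
      _ = |a - b| * γ + b * |γ - γ'| := by
          rw [abs_mul, abs_mul, abs_of_nonneg hγ0, abs_of_nonneg hb0]
  have h3 : b * |γ - γ'| ≤ 3 * (D * s) * τ :=
    mul_le_mul hbD hdiff (abs_nonneg _) (by positivity)
  have hDs : (0:ℝ) ≤ D * s := mul_nonneg hD.le hs
  nlinarith [mul_nonneg he hDs, mul_nonneg hτ hDs]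

private lemma sq_upper (K N D X : ℝ) (hK0 : 0 < K) (hN0 : 0 < N)
    (hX : X ≤ 2 * (K * N)) (hD5 : 3 * N ≤ 5 * D) : X * N ≤ 9 * D ^ 2 * K := by
  have h1 : (3 * N) * (3 * N) ≤ (5 * D) * (5 * D) :=
    mul_self_le_mul_self (by linarith) hD5
  nlinarith [mul_le_mul_of_nonneg_right hX hN0.le, mul_le_mul_of_nonneg_left h1 hK0.le]

private lemma sq_lower (K N T J ε : ℝ) (hK0 : 0 < K) (hN : 5 * K ≤ N) (hTK : 5 * T ≤ K)
    (hJ0 : 0 ≤ J) (hJT1 : J + 1 ≤ T) (hεK : ε * K ≤ K) (hT : 1 ≤ T) :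
    K * N / 4 ≤ (K - J) * (N - (1 + ε) * K - J) := by
  have hN0 : 0 < N := by linarith
  have h1 : (4/5) * K ≤ K - J := by linarith
  have h2 : (14/25) * N ≤ N - (1 + ε) * K - J := by linarith
  have h3 : ((4/5) * K) * ((14/25) * N) ≤ (K - J) * (N - (1 + ε) * K - J) :=
    mul_le_mul h1 h2 (by nlinarith) (by linarith)
  nlinarith [mul_pos hK0 hN0]

set_option maxHeartbeats 1600000 in
/-- Both
`|sqrt((k−j)(n−k'−j))·γ_j/(n−2j) − sqrt((k'−j)(n−k−j))·γ_{j+1}/(n−2j)|` and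
`|sqrt((k'−j)(n−k−j))·γ_j/(n−2j) − sqrt((k−j)(n−k'−j))·γ_{j+1}/(n−2j)|`
are at most `C·(1/t + ε)·sqrt(k/n)`, where `k' = (1+ε)k`. -/
theorem membership_oracle_bound :
    ∃ C : ℝ, 0 < C ∧ ∀ (n k t j : ℤ) (ε : ℝ),
      1 ≤ k → 5 * k ≤ n → 1 ≤ t → 5 * t ≤ k → 0 ≤ j → j ≤ k →
      1 / (k : ℝ) ≤ ε → ε ≤ 1 →
      |Real.sqrt (((k : ℝ) - (j : ℝ)) * ((n : ℝ) - (1 + ε) * (k : ℝ) - (j : ℝ)))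
            * gammaCoeff k t j / ((n : ℝ) - 2 * (j : ℝ))
          - Real.sqrt (((1 + ε) * (k : ℝ) - (j : ℝ)) * ((n : ℝ) - (k : ℝ) - (j : ℝ)))
            * gammaCoeff k t (j + 1) / ((n : ℝ) - 2 * (j : ℝ))| ≤
          C * (1 / (t : ℝ) + ε) * Real.sqrt ((k : ℝ) / (n : ℝ)) ∧
      |Real.sqrt (((1 + ε) * (k : ℝ) - (j : ℝ)) * ((n : ℝ) - (k : ℝ) - (j : ℝ)))
            * gammaCoeff k t j / ((n : ℝ) - 2 * (j : ℝ))
          - Real.sqrt (((k : ℝ) - (j : ℝ)) * ((n : ℝ) - (1 + ε) * (k : ℝ) - (j : ℝ)))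
            * gammaCoeff k t (j + 1) / ((n : ℝ) - 2 * (j : ℝ))| ≤
          C * (1 / (t : ℝ) + ε) * Real.sqrt ((k : ℝ) / (n : ℝ)) := by
  refine ⟨3, by norm_num, ?_⟩
  intro n k t j ε hk hn ht htk hj0 hjk hε1 hε2
  have hK : (1:ℝ) ≤ (k:ℝ) := by exact_mod_cast hk
  have hN : 5 * (k:ℝ) ≤ (n:ℝ) := by exact_mod_cast hn
  have hT : (1:ℝ) ≤ (t:ℝ) := by exact_mod_cast ht
  have hTK : 5 * (t:ℝ) ≤ (k:ℝ) := by exact_mod_cast htk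
  have hJ0 : (0:ℝ) ≤ (j:ℝ) := by exact_mod_cast hj0
  have hJK : (j:ℝ) ≤ (k:ℝ) := by exact_mod_cast hjk
  have hK0 : (0:ℝ) < (k:ℝ) := lt_of_lt_of_le one_pos hK
  have hN0 : (0:ℝ) < (n:ℝ) := by linarith
  have hT0 : (0:ℝ) < (t:ℝ) := lt_of_lt_of_le one_pos hT
  have hε0 : (0:ℝ) < ε := lt_of_lt_of_le (one_div_pos.mpr hK0) hε1
  have hD : (0:ℝ) < (n:ℝ) - 2 * (j:ℝ) := by linarith
  set K := (k:ℝ) with hKdef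
  set N := (n:ℝ) with hNdef
  set T := (t:ℝ) with hTdef
  set J := (j:ℝ) with hJdef
  set sk := Real.sqrt K with hskdef
  set sn := Real.sqrt N with hsndef
  have hsk2 : sk ^ 2 = K := Real.sq_sqrt hK0.le
  have hsn2 : sn ^ 2 = N := Real.sq_sqrt hN0.le
  have hsk0 : 0 < sk := Real.sqrt_pos.mpr hK0
  have hsn0 : 0 < sn := Real.sqrt_pos.mpr hN0
  have hs : Real.sqrt (K / N) = sk / sn := Real.sqrt_div hK0.le N
  have hs0 : 0 ≤ sk / sn := div_nonneg hsk0.le hsn0.le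
  -- gamma values
  have hγdef : gammaCoeff k t j = max (1 - J / T) 0 := by
    simp only [gammaCoeff, if_pos (And.intro hj0 hjk)]
    rfl
  have hγ0 : 0 ≤ gammaCoeff k t j := by rw [hγdef]; exact le_max_right _ _
  have hγ1 : gammaCoeff k t j ≤ 1 := by
    rw [hγdef]
    have h0 : 0 ≤ J / T := div_nonneg hJ0 hT0.le
    exact max_le (by linarith) zero_le_one
  have hdiff : |gammaCoeff k t j - gammaCoeff k t (j + 1)| ≤ 1 / T := by
    by_cases hjk1 : j + 1 ≤ k
    · have h1 : gammaCoeff k t (j + 1) = max (1 - (J + 1) / T) 0 := by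
        simp only [gammaCoeff, if_pos (And.intro (by omega : (0:ℤ) ≤ j + 1) hjk1)]
        push_cast
        ring_nf
        rfl
      rw [hγdef, h1]
      calc |max (1 - J / T) 0 - max (1 - (J + 1) / T) 0|
          ≤ |(1 - J / T) - (1 - (J + 1) / T)| := abs_max_sub_max_le_abs _ _ _
        _ = 1 / T := by
            rw [show (1 - J / T) - (1 - (J + 1) / T) = 1 / T by field_simp; ring]
            exact abs_of_pos (one_div_pos.mpr hT0)
    · have hjk' : j = k := by omega
      have h1 : gammaCoeff k t (j + 1) = 0 := by
        simp only [gammaCoeff, if_neg (by omega : ¬((0:ℤ) ≤ j + 1 ∧ j + 1 ≤ k))]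
      have hJKeq : K ≤ J := by rw [hJdef, hKdef, hjk']
      have h2 : gammaCoeff k t j = 0 := by
        rw [hγdef]
        have hJT : 1 - J / T ≤ 0 := by
          rw [sub_nonpos, le_div_iff₀ hT0]
          linarith
        exact max_eq_right hJT
      rw [h1, h2]
      simp only [sub_zero, abs_zero]
      exact one_div_nonneg.mpr hT0.le
  have hεK : ε * K ≤ K := by
    have := mul_le_mul_of_nonneg_right hε2 hK0.le
    linarith
  have hεK0 : 0 ≤ ε * K := mul_nonneg hε0.le hK0.le
  have hargA : (0:ℝ) ≤ (K - J) * (N - (1 + ε) * K - J) :=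
    mul_nonneg (by linarith) (by linarith)
  have hargB : (0:ℝ) ≤ ((1 + ε) * K - J) * (N - K - J) :=
    mul_nonneg (by linarith) (by linarith)
  set a := Real.sqrt ((K - J) * (N - (1 + ε) * K - J)) with hadef
  set b := Real.sqrt (((1 + ε) * K - J) * (N - K - J)) with hbdef
  have ha2 : a ^ 2 = (K - J) * (N - (1 + ε) * K - J) := Real.sq_sqrt hargA
  have hb2 : b ^ 2 = ((1 + ε) * K - J) * (N - K - J) := Real.sq_sqrt hargB
  have ha0 : 0 ≤ a := Real.sqrt_nonneg _
  have hb0 : 0 ≤ b := Real.sqrt_nonneg _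
  set D := N - 2 * J with hDdef
  have hD5 : 3 * N ≤ 5 * D := by rw [hDdef]; linarith
  -- upper bounds on a and b
  have hA2 : (K - J) * (N - (1 + ε) * K - J) ≤ 2 * (K * N) := by
    have h := mul_le_mul (show K - J ≤ 2 * K by linarith)
      (show N - (1 + ε) * K - J ≤ N by linarith) (by linarith) (by linarith)
    nlinarith [mul_pos hK0 hN0]
  have hB2 : ((1 + ε) * K - J) * (N - K - J) ≤ 2 * (K * N) := by
    have h := mul_le_mul (show (1 + ε) * K - J ≤ 2 * K by linarith)
      (show N - K - J ≤ N by linarith) (by linarith) (by linarith)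
    nlinarith [mul_pos hK0 hN0]
  have hbound : ∀ x : ℝ, 0 ≤ x → x ^ 2 ≤ 2 * (K * N) → x ≤ 3 * (D * (sk / sn)) := by
    intro x hx0 hx2
    have hrhs : 0 ≤ 3 * (D * (sk / sn)) :=
      mul_nonneg (by norm_num) (mul_nonneg hD.le hs0)
    have h9 : (3 * (D * (sk / sn))) ^ 2 = 9 * D ^ 2 * K / N := by
      rw [show (3 * (D * (sk / sn))) ^ 2 = 9 * D ^ 2 * sk ^ 2 / sn ^ 2 from by
        field_simp; ring, hsk2, hsn2]
    have hsq : x ^ 2 ≤ (3 * (D * (sk / sn))) ^ 2 := by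
      rw [h9, le_div_iff₀ hN0]
      exact sq_upper K N D (x ^ 2) hK0 hN0 hx2 hD5
    exact le_of_pow_le_pow_left₀ two_ne_zero hrhs hsq
  have hbB : b ≤ 3 * (D * (sk / sn)) := hbound b hb0 (by rw [hb2]; exact hB2)
  have hbA : a ≤ 3 * (D * (sk / sn)) := hbound a ha0 (by rw [ha2]; exact hA2)
  -- the key difference bound
  have hab : |a - b| * gammaCoeff k t j ≤ 2 * ε * (D * (sk / sn)) := by
    rcases eq_or_lt_of_le hγ0 with hγz | hγp
    · rw [← hγz, mul_zero]
      exact mul_nonneg (by linarith) (mul_nonneg hD.le hs0)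
    · -- γ > 0 forces j < t
      have hJT : J < T := by
        by_contra hcon
        push_neg at hcon
        have hle : 1 - J / T ≤ 0 := by
          rw [sub_nonpos, le_div_iff₀ hT0]; linarith
        have := max_eq_right hle
        rw [hγdef] at hγp; rw [this] at hγp; exact lt_irrefl _ hγp
      have hjt : j + 1 ≤ t := by
        have h : (j:ℝ) < (t:ℝ) := hJT
        have : j < t := by exact_mod_cast h
        omega
      have hJT1 : J + 1 ≤ T := by
        have h : ((j:ℝ)) + 1 ≤ (t:ℝ) := by exact_mod_cast hjt
        exact h
      -- lower bound on a
      have halow : sk * sn / 2 ≤ a := by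
        have h1 : (sk * sn / 2) ^ 2 = sk ^ 2 * sn ^ 2 / 4 := by ring
        rw [hsk2, hsn2] at h1
        have h2 : (sk * sn / 2) ^ 2 ≤ (K - J) * (N - (1 + ε) * K - J) := by
          rw [h1]
          exact sq_lower K N T J ε hK0 hN hTK hJ0 hJT1 hεK hT
        calc sk * sn / 2 = Real.sqrt ((sk * sn / 2) ^ 2) :=
              (Real.sqrt_sq (by positivity)).symm
          _ ≤ a := Real.sqrt_le_sqrt h2
      -- |a - b| * (a + b) = ε K D
      have hprod : |a - b| * (a + b) = ε * K * D := by
        have h1 : (a - b) * (a + b) = a ^ 2 - b ^ 2 := by ring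
        have h2 : a ^ 2 - b ^ 2 = -(ε * K * D) := by rw [ha2, hb2, hDdef]; ring
        have h3 : |a - b| * (a + b) = |(a - b) * (a + b)| := by
          rw [abs_mul, abs_of_nonneg (by linarith : (0:ℝ) ≤ a + b)]
        rw [h3, h1, h2, abs_neg, abs_of_pos (mul_pos (mul_pos hε0 hK0) hD)]
      have hEb : |a - b| ≤ 2 * ε * (D * (sk / sn)) := by
        have hE0 : 0 ≤ |a - b| := abs_nonneg _
        have hab2 : |a - b| * (sk * sn / 2) ≤ ε * K * D := by
          calc |a - b| * (sk * sn / 2) ≤ |a - b| * (a + b) :=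
                mul_le_mul_of_nonneg_left (by linarith) hE0
            _ = ε * K * D := hprod
        have hkey : (2 * ε * (D * (sk / sn))) * (sk * sn / 2) = ε * K * D := by
          rw [← hsk2]
          field_simp
        have hc : (0:ℝ) < sk * sn / 2 := by
          have := mul_pos hsk0 hsn0; linarith
        exact le_of_mul_le_mul_right (hab2.trans_eq hkey.symm) hc
      calc |a - b| * gammaCoeff k t j ≤ |a - b| * 1 :=
            mul_le_mul_of_nonneg_left hγ1 (abs_nonneg _)
        _ = |a - b| := mul_one _
        _ ≤ _ := hEb
  have hab' : |b - a| * gammaCoeff k t j ≤ 2 * ε * (D * (sk / sn)) := by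
    rw [abs_sub_comm]; exact hab
  have hτ0 : (0:ℝ) ≤ 1 / T := one_div_nonneg.mpr hT0.le
  rw [hs]
  constructor
  · exact key_abs D a b _ _ (1 / T) ε (sk / sn) hD hγ0 hγ1 hτ0 hε0.le hs0 hb0 hdiff hbB hab
  · exact key_abs D b a _ _ (1 / T) ε (sk / sn) hD hγ0 hγ1 hτ0 hε0.le hs0 ha0 hdiff hbA hab'
end
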